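/- arXiv:2405.05222 — 4 statements merged into one kernel-verified Lean document; each statement's English description precedes it below -/
import Mathlib

section
/- Let (D,F) be a valid pair with F = (f₁,…,f_s) that is not a hard pair and such that D is biconnected. Then either D is F-dicolourable, or there exists i ∈ {1,…,s} such that, setting f̃₁ = fᵢ and f̃₂ = Σ_{j≠i} f_j, the pair (D, F̃ = (f̃₁, f̃₂)) is a valid pair that is not a hard pair, and every F̃-dicolouring of D implies that D is F-dicolourable (i.e. if D is F̃-dicolourable then D is F-dicolourable). -/
open scoped Classical

/-- A finite digraph with vertex set a `Finset ℕ` and no loops.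
Both arcs `(u,v)` and `(v,u)` may be present (a digon). -/
structure Digraph' where
  verts : Finset ℕ
  arcs : Finset (ℕ × ℕ)
  mem_fst : ∀ a ∈ arcs, a.1 ∈ verts
  mem_snd : ∀ a ∈ arcs, a.2 ∈ verts
  no_loops : ∀ a ∈ arcs, a.1 ≠ a.2

namespace Digraph'

/-- In-degree of `v`. -/
def inDeg (D : Digraph') (v : ℕ) : ℕ := (D.arcs.filter fun a => a.2 = v).card

/-- Out-degree of `v`. -/
def outDeg (D : Digraph') (v : ℕ) : ℕ := (D.arcs.filter fun a => a.1 = v).card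

/-- In-neighbourhood of `v`. -/
def inNbrs (D : Digraph') (v : ℕ) : Finset ℕ := (D.arcs.filter fun a => a.2 = v).image Prod.fst

/-- Out-neighbourhood of `v`. -/
def outNbrs (D : Digraph') (v : ℕ) : Finset ℕ := (D.arcs.filter fun a => a.1 = v).image Prod.snd

/-- Neighbourhood of `v` in the underlying graph. -/
def ugNbrs (D : Digraph') (v : ℕ) : Finset ℕ := D.inNbrs v ∪ D.outNbrs v

/-- `H` is a subdigraph of `D`. -/
def IsSubdigraph (H D : Digraph') : Prop := H.verts ⊆ D.verts ∧ H.arcs ⊆ D.arcs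

/-- The subdigraph of `D` induced by the vertex set `X`. -/
def induce (D : Digraph') (X : Finset ℕ) : Digraph' where
  verts := D.verts ∩ X
  arcs := D.arcs.filter fun a => a.1 ∈ X ∧ a.2 ∈ X
  mem_fst := fun a ha => by
    simp only [Finset.mem_filter] at ha
    exact Finset.mem_inter.mpr ⟨D.mem_fst a ha.1, ha.2.1⟩
  mem_snd := fun a ha => by
    simp only [Finset.mem_filter] at ha
    exact Finset.mem_inter.mpr ⟨D.mem_snd a ha.1, ha.2.2⟩
  no_loops := fun a ha => by
    simp only [Finset.mem_filter] at ha
    exact D.no_loops a ha.1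

/-- `D − X`, the digraph obtained from `D` by deleting the vertices of `X`. -/
def del (D : Digraph') (X : Finset ℕ) : Digraph' := D.induce (D.verts \ X)

/-- Adjacency in the underlying graph of `D`. -/
def ugAdj (D : Digraph') (u v : ℕ) : Prop :=
  u ∈ D.verts ∧ v ∈ D.verts ∧ ((u, v) ∈ D.arcs ∨ (v, u) ∈ D.arcs)

/-- `D` is connected, i.e. its underlying graph is connected. -/
def Connected (D : Digraph') : Prop :=
  D.verts.Nonempty ∧ ∀ u ∈ D.verts, ∀ v ∈ D.verts, Relation.ReflTransGen D.ugAdj u v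

/-- `D` is biconnected: it has at least two vertices, is connected, and stays
connected after the deletion of any vertex. -/
def Biconnected (D : Digraph') : Prop :=
  2 ≤ D.verts.card ∧ D.Connected ∧ ∀ x ∈ D.verts, (D.del {x}).Connected

/-- Every arc of `D` lies in a digon. -/
def Bidirected (D : Digraph') : Prop := ∀ a ∈ D.arcs, (a.2, a.1) ∈ D.arcs

/-- The underlying graph of `D` is a cycle. -/
def IsCycleUG (D : Digraph') : Prop :=
  D.Connected ∧ ∀ v ∈ D.verts, (D.ugNbrs v).card = 2

/-- `D` is a bidirected odd cycle. -/
def BidirectedOddCycle (D : Digraph') : Prop :=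
  D.Bidirected ∧ D.IsCycleUG ∧ Odd D.verts.card

/-- `D` is a bidirected complete graph. -/
def BidirectedComplete (D : Digraph') : Prop :=
  ∀ u ∈ D.verts, ∀ v ∈ D.verts, u ≠ v → (u, v) ∈ D.arcs

/-- `D` is strictly-`f`-bidegenerate: every nonempty subdigraph `H` of `D` contains a
vertex `v` with `d⁻_H(v) < f⁻(v)` or `d⁺_H(v) < f⁺(v)`. -/
def StrictlyBidegenerate (D : Digraph') (f : ℕ → ℕ × ℕ) : Prop :=
  ∀ H : Digraph', H.IsSubdigraph D → H.verts.Nonempty →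
    ∃ v ∈ H.verts, H.inDeg v < (f v).1 ∨ H.outDeg v < (f v).2

/-- `α` is an `F`-dicolouring of `D`: for each colour `i`, the subdigraph induced by the
vertices coloured `i` is strictly-`Fᵢ`-bidegenerate. -/
def IsDicolouring (D : Digraph') (s : ℕ) (F : Fin s → ℕ → ℕ × ℕ) (α : ℕ → Fin s) : Prop :=
  ∀ i : Fin s, (D.induce (D.verts.filter fun v => α v = i)).StrictlyBidegenerate (F i)

/-- `D` is `F`-dicolourable. -/
def Dicolourable (D : Digraph') (s : ℕ) (F : Fin s → ℕ → ℕ × ℕ) : Prop :=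
  ∃ α : ℕ → Fin s, D.IsDicolouring s F α

/-- `(D,F)` is a valid pair: `D` is connected and the colour budget dominates the
in- and out-degrees at every vertex. -/
def ValidPair (D : Digraph') (s : ℕ) (F : Fin s → ℕ → ℕ × ℕ) : Prop :=
  D.Connected ∧ ∀ v ∈ D.verts,
    D.inDeg v ≤ ∑ i, (F i v).1 ∧ D.outDeg v ≤ ∑ i, (F i v).2

/-- `(D,F)` is tight: both budget inequalities are equalities at every vertex. -/
def Tight (D : Digraph') (s : ℕ) (F : Fin s → ℕ → ℕ × ℕ) : Prop :=
  ∀ v ∈ D.verts, ∑ i, (F i v).1 = D.inDeg v ∧ ∑ i, (F i v).2 = D.outDeg v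

/-- Hard pairs, defined inductively: monochromatic, bicycle, complete, and join hard pairs. -/
inductive IsHardPair : (s : ℕ) → Digraph' → (Fin s → ℕ → ℕ × ℕ) → Prop
  | mono {s : ℕ} {D : Digraph'} {F : Fin s → ℕ → ℕ × ℕ} (i : Fin s)
      (hbi : D.Biconnected)
      (hi : ∀ v ∈ D.verts, F i v = (D.inDeg v, D.outDeg v))
      (hk : ∀ k : Fin s, k ≠ i → ∀ v ∈ D.verts, F k v = (0, 0)) :
      IsHardPair s D F
  | bicycle {s : ℕ} {D : Digraph'} {F : Fin s → ℕ → ℕ × ℕ} (i j : Fin s) (hij : i ≠ j)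
      (hD : D.BidirectedOddCycle)
      (hi : ∀ v ∈ D.verts, F i v = (1, 1))
      (hj : ∀ v ∈ D.verts, F j v = (1, 1))
      (hk : ∀ k : Fin s, k ≠ i → k ≠ j → ∀ v ∈ D.verts, F k v = (0, 0)) :
      IsHardPair s D F
  | complete {s : ℕ} {D : Digraph'} {F : Fin s → ℕ → ℕ × ℕ}
      (hD : D.BidirectedComplete)
      (hconst : ∀ k : Fin s, ∀ u ∈ D.verts, ∀ v ∈ D.verts, F k u = F k v)
      (hsym : ∀ k : Fin s, ∀ v ∈ D.verts, (F k v).1 = (F k v).2)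
      (hsum : ∀ v ∈ D.verts, ∑ k, (F k v).2 = D.verts.card - 1) :
      IsHardPair s D F
  | join {s : ℕ} {D : Digraph'} {F : Fin s → ℕ → ℕ × ℕ}
      (D₁ D₂ : Digraph') (F₁ F₂ : Fin s → ℕ → ℕ × ℕ) (x : ℕ)
      (h₁ : IsHardPair s D₁ F₁) (h₂ : IsHardPair s D₂ F₂)
      (hx : D₁.verts ∩ D₂.verts = {x})
      (hV : D.verts = D₁.verts ∪ D₂.verts)
      (hA : D.arcs = D₁.arcs ∪ D₂.arcs)
      (hF₁ : ∀ k : Fin s, ∀ v ∈ D₁.verts, v ≠ x → F k v = F₁ k v)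
      (hF₂ : ∀ k : Fin s, ∀ v ∈ D₂.verts, v ≠ x → F k v = F₂ k v)
      (hFx : ∀ k : Fin s, F k x = ((F₁ k x).1 + (F₂ k x).1, (F₁ k x).2 + (F₂ k x).2)) :
      IsHardPair s D F

/-- The sequence of functions of the pair reduced from `(D,F)` by a colouring `α` of
`X ⊆ V(D)`: the budget of colour `i` at `u` decreases by the number of in- and out-neighbours
of `u` inside `X` coloured `i` (truncated at `0`). -/
def reduceF (D : Digraph') {s : ℕ} (F : Fin s → ℕ → ℕ × ℕ) (X : Finset ℕ) (α : ℕ → Fin s) :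
    Fin s → ℕ → ℕ × ℕ :=
  fun i u =>
    ((F i u).1 - ((D.inNbrs u ∩ X).filter fun w => α w = i).card,
     (F i u).2 - ((D.outNbrs u ∩ X).filter fun w => α w = i).card)

/-- `B` is a block of `D`: a maximal biconnected subdigraph. -/
def IsBlock (B D : Digraph') : Prop :=
  B.IsSubdigraph D ∧ B.Biconnected ∧
    ∀ B' : Digraph', B'.IsSubdigraph D → B'.Biconnected → B.IsSubdigraph B' → B' = B

/-- `x` is a cut-vertex of `D`: `D − x` is disconnected. -/
def CutVertex (D : Digraph') (x : ℕ) : Prop :=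
  x ∈ D.verts ∧ (D.del {x}).verts.Nonempty ∧ ¬ (D.del {x}).Connected

/-- `B` is an end-block of `D` whose unique cut-vertex (of `D`) in `B` is `x`. -/
def IsEndBlockAt (B D : Digraph') (x : ℕ) : Prop :=
  IsBlock B D ∧ x ∈ B.verts ∧ D.CutVertex x ∧ ∀ y ∈ B.verts, D.CutVertex y → y = x

/-- `B` is a monochromatic hard end-block with cut-vertex `x`, for colour `c`. -/
def MonoHardEndBlock {s : ℕ} (F : Fin s → ℕ → ℕ × ℕ) (B : Digraph') (x : ℕ) (c : Fin s) : Prop :=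
  B.inDeg x ≤ (F c x).1 ∧ B.outDeg x ≤ (F c x).2 ∧
    ∀ v ∈ B.verts, v ≠ x →
      F c v = (B.inDeg v, B.outDeg v) ∧ ∀ k : Fin s, k ≠ c → F k v = (0, 0)

/-- `B` is a bicycle hard end-block with cut-vertex `x`. -/
def BicycleHardEndBlock {s : ℕ} (F : Fin s → ℕ → ℕ × ℕ) (B : Digraph') (x : ℕ) : Prop :=
  B.BidirectedOddCycle ∧
    ∃ i j : Fin s, i ≠ j ∧
      1 ≤ (F i x).1 ∧ 1 ≤ (F i x).2 ∧ 1 ≤ (F j x).1 ∧ 1 ≤ (F j x).2 ∧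
      ∀ v ∈ B.verts, v ≠ x →
        F i v = (1, 1) ∧ F j v = (1, 1) ∧ ∀ k : Fin s, k ≠ i → k ≠ j → F k v = (0, 0)

/-- `B` is a complete hard end-block with cut-vertex `x`. -/
def CompleteHardEndBlock {s : ℕ} (F : Fin s → ℕ → ℕ × ℕ) (B : Digraph') (x : ℕ) : Prop :=
  B.BidirectedComplete ∧
    (∀ k : Fin s, ∀ u ∈ B.verts, u ≠ x → ∀ v ∈ B.verts, v ≠ x → F k u = F k v) ∧
    (∀ k : Fin s, ∀ v ∈ B.verts, v ≠ x → (F k v).1 = (F k v).2) ∧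
    (∀ k : Fin s, ∀ u ∈ B.verts, u ≠ x → (F k u).1 ≤ (F k x).1 ∧ (F k u).2 ≤ (F k x).2)

/-- `B` is a hard end-block with cut-vertex `x`. -/
def HardEndBlock {s : ℕ} (F : Fin s → ℕ → ℕ × ℕ) (B : Digraph') (x : ℕ) : Prop :=
  (∃ c : Fin s, MonoHardEndBlock F B x c) ∨
    BicycleHardEndBlock F B x ∨ CompleteHardEndBlock F B x

/-- `(D',F')` is the contraction of `(D,F)` with respect to the hard end-block `B` with
cut-vertex `x`, where `u` is a vertex of `B` other than `x`. -/
def IsContraction (D : Digraph') {s : ℕ} (F : Fin s → ℕ → ℕ × ℕ) (B : Digraph') (x u : ℕ)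
    (D' : Digraph') (F' : Fin s → ℕ → ℕ × ℕ) : Prop :=
  D' = D.del (B.verts \ {x}) ∧
  (∀ k : Fin s, ∀ v ∈ D'.verts, v ≠ x → F' k v = F k v) ∧
  ((∃ c : Fin s, MonoHardEndBlock F B x c ∧
      F' c x = ((F c x).1 - B.inDeg x, (F c x).2 - B.outDeg x) ∧
      ∀ k : Fin s, k ≠ c → F' k x = F k x) ∨
   ((¬ ∃ c : Fin s, MonoHardEndBlock F B x c) ∧
      ∀ k : Fin s, F' k x = ((F k x).1 - (F k u).1, (F k x).2 - (F k u).2)))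

/-- Property (E): all the functions exceed `1` in the relevant coordinate at every vertex
having an in-(resp. out-)neighbour. -/
def PropE (D : Digraph') {s : ℕ} (F : Fin s → ℕ → ℕ × ℕ) : Prop :=
  ∀ x ∈ D.verts, ∀ c : Fin s,
    (0 < D.inDeg x → 1 ≤ (F c x).1) ∧ (0 < D.outDeg x → 1 ≤ (F c x).2)

/-- `C` is a directed cycle: connected, and every vertex has in- and out-degree one. -/
def IsDirectedCycle (C : Digraph') : Prop :=
  C.Connected ∧ ∀ v ∈ C.verts, C.inDeg v = 1 ∧ C.outDeg v = 1

/-- `D` is acyclic: it contains no directed cycle. -/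
def AcyclicD (D : Digraph') : Prop :=
  ¬ ∃ C : Digraph', C.IsSubdigraph D ∧ C.IsDirectedCycle

/-- `α` is a `k`-dicolouring of `D`: every colour class induces an acyclic subdigraph. -/
def IsKDicolouring (D : Digraph') (k : ℕ) (α : ℕ → Fin k) : Prop :=
  ∀ i : Fin k, AcyclicD (D.induce (D.verts.filter fun v => α v = i))

/-- The dichromatic number of `D`. -/
noncomputable def dichromatic (D : Digraph') : ℕ :=
  sInf {k : ℕ | ∃ α : ℕ → Fin k, D.IsKDicolouring k α}

end Digraph'

open Digraph'

/-- The two-colour sequence obtained from `F` by keeping colour `i` and merging all other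
colours. -/
def twoColours {s : ℕ} (F : Fin s → ℕ → ℕ × ℕ) (i : Fin s) : Fin 2 → ℕ → ℕ × ℕ :=
  ![F i, fun v => ∑ j ∈ Finset.univ.erase i, F j v]
namespace Digraph'

theorem ext' {D₁ D₂ : Digraph'} (h1 : D₁.verts = D₂.verts) (h2 : D₁.arcs = D₂.arcs) :
    D₁ = D₂ := by
  cases D₁; cases D₂; simp_all

lemma del_verts (D : Digraph') (X : Finset ℕ) : (D.del X).verts = D.verts \ X := by
  simp [del, induce, Finset.inter_eq_right.mpr (Finset.sdiff_subset)]

lemma arc_mem_inNbrs {D : Digraph'} {a : ℕ × ℕ} (h : a ∈ D.arcs) : a.1 ∈ D.inNbrs a.2 := by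
  simp only [inNbrs, Finset.mem_image]
  exact ⟨a, Finset.mem_filter.mpr ⟨h, rfl⟩, rfl⟩

lemma arc_mem_outNbrs {D : Digraph'} {a : ℕ × ℕ} (h : a ∈ D.arcs) : a.2 ∈ D.outNbrs a.1 := by
  simp only [outNbrs, Finset.mem_image]
  exact ⟨a, Finset.mem_filter.mpr ⟨h, rfl⟩, rfl⟩

lemma inDeg_pos {D : Digraph'} {a : ℕ × ℕ} (h : a ∈ D.arcs) : 0 < D.inDeg a.2 :=
  Finset.card_pos.mpr ⟨a, Finset.mem_filter.mpr ⟨h, rfl⟩⟩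

lemma card_inNbrs_le (D : Digraph') (v : ℕ) : (D.inNbrs v).card ≤ D.inDeg v :=
  Finset.card_image_le

lemma card_outNbrs_le (D : Digraph') (v : ℕ) : (D.outNbrs v).card ≤ D.outDeg v :=
  Finset.card_image_le

/-- A connected digraph with at least 2 vertices has an arc. -/
lemma exists_arc {D : Digraph'} (hc : D.Connected) (h2 : 2 ≤ D.verts.card) :
    D.arcs.Nonempty := by
  obtain ⟨u, hu, v, hv, huv⟩ := Finset.one_lt_card.mp h2
  have := hc.2 u hu v hv
  induction this with
  | refl => exact absurd rfl huv
  | tail hs hadj ih =>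
    rcases hadj.2.2 with h | h
    · exact ⟨_, h⟩
    · exact ⟨_, h⟩

end Digraph'
namespace Digraph'

lemma arcs_eq_empty_of_singleton {D : Digraph'} {x : ℕ} (h : D.verts = {x}) :
    D.arcs = ∅ := by
  apply Finset.eq_empty_of_forall_notMem
  intro a ha
  have h1 := D.mem_fst a ha
  have h2 := D.mem_snd a ha
  rw [h, Finset.mem_singleton] at h1 h2
  exact D.no_loops a ha (h1.trans h2.symm)

/-- Lemma B: a hard pair on a single vertex has all budgets `(0,0)`. -/
lemma hard_singleton {s : ℕ} {D : Digraph'} {F : Fin s → ℕ → ℕ × ℕ}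
    (h : IsHardPair s D F) : ∀ x : ℕ, D.verts = {x} → ∀ k : Fin s, F k x = (0, 0) := by
  induction h with
  | @mono D F i hbi hi hk =>
    intro x hx k
    exfalso
    have h1 := hbi.1
    rw [hx, Finset.card_singleton] at h1
    omega
  | @bicycle D F i j hij hD hi hj hk =>
    intro x hx k
    exfalso
    have h2 := hD.2.1.2 x (by rw [hx]; exact Finset.mem_singleton_self x)
    have : D.ugNbrs x = ∅ := by
      simp [ugNbrs, inNbrs, outNbrs, arcs_eq_empty_of_singleton hx]
    rw [this] at h2
    simp at h2
  | @complete D F hD hconst hsym hsum =>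
    intro x hx k
    have hxmem : x ∈ D.verts := by rw [hx]; exact Finset.mem_singleton_self x
    have h1 := hsum x hxmem
    rw [hx] at h1
    simp at h1
    have h2 : (F k x).2 = 0 := h1 k
    have h3 := hsym k x hxmem
    exact Prod.ext (h3.trans h2) h2
  | @join D F D₁ D₂ F₁ F₂ x h₁ h₂ hx hV hA hF₁ hF₂ hFx ih₁ ih₂ =>
    intro y hy k
    have hx1 : x ∈ D₁.verts := by
      have : x ∈ D₁.verts ∩ D₂.verts := by rw [hx]; exact Finset.mem_singleton_self x
      exact (Finset.mem_inter.mp this).1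
    have hx2 : x ∈ D₂.verts := by
      have : x ∈ D₁.verts ∩ D₂.verts := by rw [hx]; exact Finset.mem_singleton_self x
      exact (Finset.mem_inter.mp this).2
    have hxy : x = y := by
      have : x ∈ D.verts := by rw [hV]; exact Finset.mem_union_left _ hx1
      rw [hy] at this; exact Finset.mem_singleton.mp this
    subst hxy
    have hD1 : D₁.verts = {x} := by
      apply Finset.Subset.antisymm
      · intro z hz
        have : z ∈ D.verts := by rw [hV]; exact Finset.mem_union_left _ hz
        rw [hy] at this; exact this
      · simp [hx1]
    have hD2 : D₂.verts = {x} := by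
      apply Finset.Subset.antisymm
      · intro z hz
        have : z ∈ D.verts := by rw [hV]; exact Finset.mem_union_right _ hz
        rw [hy] at this; exact this
      · simp [hx2]
    rw [hFx k, ih₁ x hD1 k, ih₂ x hD2 k]
    rfl

end Digraph'
namespace Digraph'

/-- The three "basic" shapes of a hard pair on a biconnected digraph. -/
def BaseForm (s : ℕ) (D : Digraph') (F : Fin s → ℕ → ℕ × ℕ) : Prop :=
  (∃ i : Fin s, (∀ v ∈ D.verts, F i v = (D.inDeg v, D.outDeg v)) ∧
      ∀ k : Fin s, k ≠ i → ∀ v ∈ D.verts, F k v = (0, 0)) ∨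
  (D.BidirectedOddCycle ∧ ∃ i j : Fin s, i ≠ j ∧ (∀ v ∈ D.verts, F i v = (1, 1)) ∧
      (∀ v ∈ D.verts, F j v = (1, 1)) ∧
      ∀ k : Fin s, k ≠ i → k ≠ j → ∀ v ∈ D.verts, F k v = (0, 0)) ∨
  (D.BidirectedComplete ∧ (∀ k : Fin s, ∀ u ∈ D.verts, ∀ v ∈ D.verts, F k u = F k v) ∧
      (∀ k : Fin s, ∀ v ∈ D.verts, (F k v).1 = (F k v).2) ∧
      ∀ v ∈ D.verts, ∑ k, (F k v).2 = D.verts.card - 1)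

lemma baseForm_hard {s : ℕ} {D : Digraph'} {F : Fin s → ℕ → ℕ × ℕ}
    (hbi : D.Biconnected) (h : BaseForm s D F) : IsHardPair s D F := by
  rcases h with ⟨i, hi, hk⟩ | ⟨hD, i, j, hij, hi, hj, hk⟩ | ⟨hD, h1, h2, h3⟩
  · exact IsHardPair.mono i hbi hi hk
  · exact IsHardPair.bicycle i j hij hD hi hj hk
  · exact IsHardPair.complete hD h1 h2 h3

/-- If a hard pair's digraph is biconnected, then the pair has one of the three basic shapes. -/
lemma hard_biconnected_baseForm {s : ℕ} {D : Digraph'} {F : Fin s → ℕ → ℕ × ℕ}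
    (h : IsHardPair s D F) : D.Biconnected → BaseForm s D F := by
  induction h with
  | @mono D F i hbi hi hk => exact fun _ => Or.inl ⟨i, hi, hk⟩
  | @bicycle D F i j hij hD hi hj hk => exact fun _ => Or.inr (Or.inl ⟨hD, i, j, hij, hi, hj, hk⟩)
  | @complete D F hD hconst hsym hsum => exact fun _ => Or.inr (Or.inr ⟨hD, hconst, hsym, hsum⟩)
  | @join D F D₁ D₂ F₁ F₂ x h₁ h₂ hx hV hA hF₁ hF₂ hFx ih₁ ih₂ =>
    intro hbi
    have hx1 : x ∈ D₁.verts := by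
      have : x ∈ D₁.verts ∩ D₂.verts := by rw [hx]; exact Finset.mem_singleton_self x
      exact (Finset.mem_inter.mp this).1
    have hx2 : x ∈ D₂.verts := by
      have : x ∈ D₁.verts ∩ D₂.verts := by rw [hx]; exact Finset.mem_singleton_self x
      exact (Finset.mem_inter.mp this).2
    have hxD : x ∈ D.verts := by rw [hV]; exact Finset.mem_union_left _ hx1
    -- at least one side is the single vertex x
    have key : D₁.verts = {x} ∨ D₂.verts = {x} := by
      by_contra hcon
      push_neg at hcon
      obtain ⟨hc1, hc2⟩ := hcon
      -- pick u ∈ D₁ \ {x}, w ∈ D₂ \ {x}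
      have hu : ∃ u ∈ D₁.verts, u ≠ x := by
        by_contra hu
        push_neg at hu
        exact hc1 (Finset.Subset.antisymm (fun z hz => Finset.mem_singleton.mpr (hu z hz))
          (Finset.singleton_subset_iff.mpr hx1))
      have hw : ∃ w ∈ D₂.verts, w ≠ x := by
        by_contra hw
        push_neg at hw
        exact hc2 (Finset.Subset.antisymm (fun z hz => Finset.mem_singleton.mpr (hw z hz))
          (Finset.singleton_subset_iff.mpr hx2))
      obtain ⟨u, hu1, hu2⟩ := hu
      obtain ⟨w, hw1, hw2⟩ := hw
      have hconn := hbi.2.2 x hxD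
      have hudel : u ∈ (D.del {x}).verts := by
        rw [del_verts]
        exact Finset.mem_sdiff.mpr ⟨by rw [hV]; exact Finset.mem_union_left _ hu1,
          by simpa using hu2⟩
      have hwdel : w ∈ (D.del {x}).verts := by
        rw [del_verts]
        exact Finset.mem_sdiff.mpr ⟨by rw [hV]; exact Finset.mem_union_right _ hw1,
          by simpa using hw2⟩
      have hpath := hconn.2 u hudel w hwdel
      -- invariant: reachable vertices from u stay in D₁ \ {x}
      have hinv : ∀ z : ℕ, Relation.ReflTransGen (D.del {x}).ugAdj u z →
          z ∈ D₁.verts ∧ z ≠ x := by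
        intro z hz
        induction hz with
        | refl => exact ⟨hu1, hu2⟩
        | @tail b c hs hadj ih =>
          obtain ⟨hp1, hp2⟩ := ih
          obtain ⟨hb, hcmem, harc⟩ := hadj
          have hcne : c ≠ x := by
            have : c ∈ (D.del {x}).verts := hcmem
            rw [del_verts] at this
            have := (Finset.mem_sdiff.mp this).2
            simpa using this
          refine ⟨?_, hcne⟩
          -- the arc is in D₁
          have harc' : ∃ a ∈ D.arcs, (a.1 = b ∧ a.2 = c) ∨ (a.1 = c ∧ a.2 = b) := by
            rcases harc with h | h
            · refine ⟨(b, c), ?_, Or.inl ⟨rfl, rfl⟩⟩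
              have : (b, c) ∈ (D.del {x}).arcs := h
              simp only [del, induce, Finset.mem_filter] at this
              exact this.1
            · refine ⟨(c, b), ?_, Or.inr ⟨rfl, rfl⟩⟩
              have : (c, b) ∈ (D.del {x}).arcs := h
              simp only [del, induce, Finset.mem_filter] at this
              exact this.1
          obtain ⟨a, ha, hends⟩ := harc'
          rw [hA] at ha
          rcases Finset.mem_union.mp ha with ha1 | ha2
          · -- arc in D₁, so c ∈ D₁
            rcases hends with ⟨e1, e2⟩ | ⟨e1, e2⟩
            · exact e2 ▸ D₁.mem_snd a ha1
            · exact e1 ▸ D₁.mem_fst a ha1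
          · -- arc in D₂: then b ∈ D₂ ∩ D₁ = {x}, contradiction
            exfalso
            have hbD2 : b ∈ D₂.verts := by
              rcases hends with ⟨e1, e2⟩ | ⟨e1, e2⟩
              · exact e1 ▸ D₂.mem_fst a ha2
              · exact e2 ▸ D₂.mem_snd a ha2
            have : b ∈ D₁.verts ∩ D₂.verts := Finset.mem_inter.mpr ⟨hp1, hbD2⟩
            rw [hx] at this
            exact hp2 (Finset.mem_singleton.mp this)
      have := hinv w hpath
      have : w ∈ D₁.verts ∩ D₂.verts := Finset.mem_inter.mpr ⟨this.1, hw1⟩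
      rw [hx] at this
      exact hw2 (Finset.mem_singleton.mp this)
    -- symmetric handling
    rcases key with hsing | hsing
    · -- D₁ is the singleton, so D = D₂ (up to defeq) and F = F₂ on verts
      have hz : ∀ k, F₁ k x = (0, 0) := hard_singleton h₁ x hsing
      have harc1 : D₁.arcs = ∅ := arcs_eq_empty_of_singleton hsing
      have hDeq : D = D₂ := by
        apply ext'
        · rw [hV, hsing]
          exact Finset.union_eq_right.mpr (Finset.singleton_subset_iff.mpr hx2)
        · rw [hA, harc1]
          exact Finset.empty_union _
      have hFeq : ∀ k : Fin s, ∀ v ∈ D.verts, F k v = F₂ k v := by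
        intro k v hv
        by_cases hvx : v = x
        · subst hvx
          rw [hFx k, hz k]
          simp
        · exact hF₂ k v (by rw [hDeq] at hv; exact hv) hvx
      have hbf := ih₂ (hDeq ▸ hbi)
      rw [← hDeq] at hbf
      -- transfer along hFeq
      rcases hbf with ⟨i, hi, hk⟩ | ⟨hD, i, j, hij, hi, hj, hk⟩ | ⟨hD, h1, h2, h3⟩
      · exact Or.inl ⟨i, fun v hv => (hFeq i v hv).trans (hi v hv),
          fun k hki v hv => (hFeq k v hv).trans (hk k hki v hv)⟩
      · exact Or.inr (Or.inl ⟨hD, i, j, hij, fun v hv => (hFeq i v hv).trans (hi v hv),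
          fun v hv => (hFeq j v hv).trans (hj v hv),
          fun k hki hkj v hv => (hFeq k v hv).trans (hk k hki hkj v hv)⟩)
      · refine Or.inr (Or.inr ⟨hD, ?_, ?_, ?_⟩)
        · intro k u hu v hv
          rw [hFeq k u hu, hFeq k v hv]; exact h1 k u hu v hv
        · intro k v hv
          rw [hFeq k v hv]; exact h2 k v hv
        · intro v hv
          have : ∀ k : Fin s, (F k v).2 = (F₂ k v).2 := fun k => by rw [hFeq k v hv]
          rw [Finset.sum_congr rfl fun k _ => this k]
          exact h3 v hv
    · have hz : ∀ k, F₂ k x = (0, 0) := hard_singleton h₂ x hsing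
      have harc2 : D₂.arcs = ∅ := arcs_eq_empty_of_singleton hsing
      have hDeq : D = D₁ := by
        apply ext'
        · rw [hV, hsing]
          exact Finset.union_eq_left.mpr (Finset.singleton_subset_iff.mpr hx1)
        · rw [hA, harc2]
          exact Finset.union_empty _
      have hFeq : ∀ k : Fin s, ∀ v ∈ D.verts, F k v = F₁ k v := by
        intro k v hv
        by_cases hvx : v = x
        · subst hvx
          rw [hFx k, hz k]
          simp
        · exact hF₁ k v (by rw [hDeq] at hv; exact hv) hvx
      have hbf := ih₁ (hDeq ▸ hbi)
      rw [← hDeq] at hbf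
      rcases hbf with ⟨i, hi, hk⟩ | ⟨hD, i, j, hij, hi, hj, hk⟩ | ⟨hD, h1, h2, h3⟩
      · exact Or.inl ⟨i, fun v hv => (hFeq i v hv).trans (hi v hv),
          fun k hki v hv => (hFeq k v hv).trans (hk k hki v hv)⟩
      · exact Or.inr (Or.inl ⟨hD, i, j, hij, fun v hv => (hFeq i v hv).trans (hi v hv),
          fun v hv => (hFeq j v hv).trans (hj v hv),
          fun k hki hkj v hv => (hFeq k v hv).trans (hk k hki hkj v hv)⟩)
      · refine Or.inr (Or.inr ⟨hD, ?_, ?_, ?_⟩)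
        · intro k u hu v hv
          rw [hFeq k u hu, hFeq k v hv]; exact h1 k u hu v hv
        · intro k v hv
          rw [hFeq k v hv]; exact h2 k v hv
        · intro v hv
          have : ∀ k : Fin s, (F k v).2 = (F₁ k v).2 := fun k => by rw [hFeq k v hv]
          rw [Finset.sum_congr rfl fun k _ => this k]
          exact h3 v hv

end Digraph'
namespace Digraph'

lemma IsSubdigraph.trans' {K H D : Digraph'} (h1 : K.IsSubdigraph H) (h2 : H.IsSubdigraph D) :
    K.IsSubdigraph D := ⟨h1.1.trans h2.1, h1.2.trans h2.2⟩

lemma induce_isSubdigraph (D : Digraph') (X : Finset ℕ) : (D.induce X).IsSubdigraph D :=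
  ⟨Finset.inter_subset_left, Finset.filter_subset _ _⟩

lemma strictly_mono {H K : Digraph'} {g : ℕ → ℕ × ℕ} (hK : K.IsSubdigraph H)
    (h : H.StrictlyBidegenerate g) : K.StrictlyBidegenerate g :=
  fun L hL hne => h L (hL.trans' hK) hne

lemma strictly_of_empty {D : Digraph'} (h : D.verts = ∅) (g : ℕ → ℕ × ℕ) :
    D.StrictlyBidegenerate g := by
  intro K hK hne
  obtain ⟨w, hw⟩ := hne
  have := hK.1 hw
  rw [h] at this
  simp at this

lemma induce_induce (D : Digraph') {X Y : Finset ℕ} (hYX : Y ⊆ X) :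
    (D.induce X).induce Y = D.induce Y := by
  apply ext'
  · show D.verts ∩ X ∩ Y = D.verts ∩ Y
    rw [Finset.inter_assoc, Finset.inter_eq_right.mpr hYX]
  · show ((D.arcs.filter _).filter _) = D.arcs.filter _
    rw [Finset.filter_filter]
    apply Finset.filter_congr
    intro a _
    constructor
    · rintro ⟨_, h⟩; exact h
    · rintro ⟨h1, h2⟩; exact ⟨⟨hYX h1, hYX h2⟩, h1, h2⟩

lemma induce_verts_of_subset {D : Digraph'} {X : Finset ℕ} (h : X ⊆ D.verts) :
    (D.induce X).verts = X := Finset.inter_eq_right.mpr h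

/-- Partition lemma: a digraph strictly bidegenerate w.r.t. the sum of budgets over `T`
can be `T`-coloured with each class strictly bidegenerate w.r.t. its own budget. -/
lemma partition_lemma {s : ℕ} (hs : 0 < s) (F : Fin s → ℕ → ℕ × ℕ) (T : Finset (Fin s)) :
    ∀ n : ℕ, ∀ H : Digraph', H.verts.card ≤ n →
      H.StrictlyBidegenerate (fun v => ∑ j ∈ T, F j v) →
      ∃ β : ℕ → Fin s, (∀ v ∈ H.verts, β v ∈ T) ∧
        ∀ j ∈ T, (H.induce (H.verts.filter fun w => β w = j)).StrictlyBidegenerate (F j) := by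
  intro n
  induction n with
  | zero =>
    intro H hcard _
    refine ⟨fun _ => ⟨0, hs⟩, ?_, ?_⟩
    · intro v hv
      exact absurd (Finset.card_eq_zero.mp (Nat.le_zero.mp hcard) ▸ hv) (Finset.notMem_empty v)
    · intro j _
      apply strictly_of_empty
      rw [Finset.card_eq_zero.mp (Nat.le_zero.mp hcard)]
      simp [induce]
  | succ n ih =>
    intro H hcard hsb
    rcases Finset.eq_empty_or_nonempty H.verts with hemp | hne
    · refine ⟨fun _ => ⟨0, hs⟩, ?_, ?_⟩
      · intro v hv; rw [hemp] at hv; simp at hv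
      · intro j _
        apply strictly_of_empty
        rw [hemp]; simp [induce]
    · -- find a removable vertex
      obtain ⟨v, hv, hdeg⟩ := hsb H ⟨Finset.Subset.refl _, Finset.Subset.refl _⟩ hne
      set H' := H.induce (H.verts.erase v) with hH'
      have hH'verts : H'.verts = H.verts.erase v :=
        induce_verts_of_subset (Finset.erase_subset _ _)
      have hH'card : H'.verts.card ≤ n := by
        rw [hH'verts, Finset.card_erase_of_mem hv]
        omega
      have hH'sb : H'.StrictlyBidegenerate (fun w => ∑ j ∈ T, F j w) :=
        strictly_mono (induce_isSubdigraph _ _) hsb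
      obtain ⟨β', hβ'mem, hβ'cl⟩ := ih H' hH'card hH'sb
      -- the class of colour j in H'
      have hclass : ∀ j : Fin s, H'.verts.filter (fun w => β' w = j)
          = (H.verts.erase v).filter (fun w => β' w = j) := by
        intro j; rw [hH'verts]
      -- choose a colour c for v
      have hkey : ∃ c ∈ T,
          ((H.inNbrs v) ∩ ((H.verts.erase v).filter fun w => β' w = c)).card < (F c v).1 ∨
          ((H.outNbrs v) ∩ ((H.verts.erase v).filter fun w => β' w = c)).card < (F c v).2 := by
        rcases hdeg with hin | hout
        · rw [Prod.fst_sum] at hin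
          by_contra hcon
          push_neg at hcon
          have hsum : ∑ j ∈ T, (F j v).1 ≤
              ∑ j ∈ T, ((H.inNbrs v) ∩ ((H.verts.erase v).filter fun w => β' w = j)).card := by
            apply Finset.sum_le_sum
            intro j hj
            exact (hcon j hj).1
          have hdisj : ∀ x ∈ T, ∀ y ∈ T, x ≠ y →
              Disjoint ((H.inNbrs v) ∩ ((H.verts.erase v).filter fun w => β' w = x))
                ((H.inNbrs v) ∩ ((H.verts.erase v).filter fun w => β' w = y)) := by
            intro x _ y _ hxy
            rw [Finset.disjoint_left]
            intro a ha ha'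
            have h1 := (Finset.mem_filter.mp (Finset.mem_inter.mp ha).2).2
            have h2 := (Finset.mem_filter.mp (Finset.mem_inter.mp ha').2).2
            exact hxy (h1 ▸ h2 ▸ rfl)
          have hbu := (Finset.card_biUnion hdisj).symm
          have hsub : (T.biUnion fun j =>
              (H.inNbrs v) ∩ ((H.verts.erase v).filter fun w => β' w = j)) ⊆ H.inNbrs v := by
            intro a ha
            obtain ⟨j, _, haj⟩ := Finset.mem_biUnion.mp ha
            exact (Finset.mem_inter.mp haj).1
          have : ∑ j ∈ T, ((H.inNbrs v) ∩ ((H.verts.erase v).filter fun w => β' w = j)).card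
              ≤ (H.inNbrs v).card := hbu ▸ Finset.card_le_card hsub
          have := lt_of_le_of_lt (hsum.trans (this.trans (card_inNbrs_le H v))) hin
          omega
        · rw [Prod.snd_sum] at hout
          by_contra hcon
          push_neg at hcon
          have hsum : ∑ j ∈ T, (F j v).2 ≤
              ∑ j ∈ T, ((H.outNbrs v) ∩ ((H.verts.erase v).filter fun w => β' w = j)).card := by
            apply Finset.sum_le_sum
            intro j hj
            exact (hcon j hj).2
          have hdisj : ∀ x ∈ T, ∀ y ∈ T, x ≠ y →
              Disjoint ((H.outNbrs v) ∩ ((H.verts.erase v).filter fun w => β' w = x))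
                ((H.outNbrs v) ∩ ((H.verts.erase v).filter fun w => β' w = y)) := by
            intro x _ y _ hxy
            rw [Finset.disjoint_left]
            intro a ha ha'
            have h1 := (Finset.mem_filter.mp (Finset.mem_inter.mp ha).2).2
            have h2 := (Finset.mem_filter.mp (Finset.mem_inter.mp ha').2).2
            exact hxy (h1 ▸ h2 ▸ rfl)
          have hbu := (Finset.card_biUnion hdisj).symm
          have hsub : (T.biUnion fun j =>
              (H.outNbrs v) ∩ ((H.verts.erase v).filter fun w => β' w = j)) ⊆ H.outNbrs v := by
            intro a ha
            obtain ⟨j, _, haj⟩ := Finset.mem_biUnion.mp ha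
            exact (Finset.mem_inter.mp haj).1
          have : ∑ j ∈ T, ((H.outNbrs v) ∩ ((H.verts.erase v).filter fun w => β' w = j)).card
              ≤ (H.outNbrs v).card := hbu ▸ Finset.card_le_card hsub
          have := lt_of_le_of_lt (hsum.trans (this.trans (card_outNbrs_le H v))) hout
          omega
      obtain ⟨c, hcT, hc⟩ := hkey
      set C : Finset ℕ := (H.verts.erase v).filter (fun w => β' w = c) with hC
      refine ⟨Function.update β' v c, ?_, ?_⟩
      · intro w hw
        by_cases hwv : w = v
        · subst hwv; rw [Function.update_self]; exact hcT
        · rw [Function.update_of_ne hwv]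
          exact hβ'mem w (by rw [hH'verts]; exact Finset.mem_erase.mpr ⟨hwv, hw⟩)
      · intro j hjT
        by_cases hjc : j = c
        · subst hjc
          -- the class of j is insert v C
          have hceq : H.verts.filter (fun w => Function.update β' v j w = j)
              = insert v C := by
            ext w
            constructor
            · intro hw
              obtain ⟨hw1, hw2⟩ := Finset.mem_filter.mp hw
              by_cases hwv : w = v
              · exact Finset.mem_insert.mpr (Or.inl hwv)
              · rw [Function.update_of_ne hwv] at hw2
                exact Finset.mem_insert.mpr (Or.inr (Finset.mem_filter.mpr
                  ⟨Finset.mem_erase.mpr ⟨hwv, hw1⟩, hw2⟩))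
            · intro hw
              rcases Finset.mem_insert.mp hw with hwv | hw'
              · subst hwv
                exact Finset.mem_filter.mpr ⟨hv, Function.update_self _ _ _⟩
              · obtain ⟨hw1, hw2⟩ := Finset.mem_filter.mp hw'
                obtain ⟨hwv, hwm⟩ := Finset.mem_erase.mp hw1
                exact Finset.mem_filter.mpr
                  ⟨hwm, by rw [Function.update_of_ne hwv]; exact hw2⟩
          rw [hceq]
          -- show strictness of the extended class
          have hCclass : (H.induce C).StrictlyBidegenerate (F j) := by
            have := hβ'cl j hjT
            rw [hclass j] at this
            rwa [induce_induce H (Finset.filter_subset _ _)] at this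
          intro K hK hKne
          by_cases hvK : v ∈ K.verts
          · refine ⟨v, hvK, ?_⟩
            rcases hc with hcin | hcout
            · left
              refine lt_of_le_of_lt ?_ hcin
              -- K.inDeg v ≤ card (inNbrs ∩ C)
              apply Finset.card_le_card_of_injOn Prod.fst
              · intro a ha
                obtain ⟨haK, ha2⟩ := Finset.mem_filter.mp ha
                have haH : a ∈ (H.induce (insert v C)).arcs := hK.2 haK
                obtain ⟨haHa, hin1, _⟩ := Finset.mem_filter.mp haH
                have h1 : a.1 ∈ H.inNbrs v := ha2 ▸ arc_mem_inNbrs haHa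
                have hne1 : a.1 ≠ v := by
                  intro heq
                  exact K.no_loops a haK (heq.trans ha2.symm)
                have h2 : a.1 ∈ C := by
                  rcases Finset.mem_insert.mp hin1 with h | h
                  · exact absurd h hne1
                  · exact h
                exact Finset.mem_inter.mpr ⟨h1, h2⟩
              · intro a ha b hb hab
                simp only [Finset.coe_filter, Set.mem_setOf_eq] at ha hb
                exact Prod.ext hab (ha.2.trans hb.2.symm)
            · right
              refine lt_of_le_of_lt ?_ hcout
              apply Finset.card_le_card_of_injOn Prod.snd
              · intro a ha
                obtain ⟨haK, ha2⟩ := Finset.mem_filter.mp ha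
                have haH : a ∈ (H.induce (insert v C)).arcs := hK.2 haK
                obtain ⟨haHa, _, hin2⟩ := Finset.mem_filter.mp haH
                have h1 : a.2 ∈ H.outNbrs v := ha2 ▸ arc_mem_outNbrs haHa
                have hne1 : a.2 ≠ v := by
                  intro heq
                  exact K.no_loops a haK (ha2.trans heq.symm)
                have h2 : a.2 ∈ C := by
                  rcases Finset.mem_insert.mp hin2 with h | h
                  · exact absurd h hne1
                  · exact h
                exact Finset.mem_inter.mpr ⟨h1, h2⟩
              · intro a ha b hb hab
                simp only [Finset.coe_filter, Set.mem_setOf_eq] at ha hb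
                exact Prod.ext (ha.2.trans hb.2.symm) hab
          · -- v ∉ K: K is a subdigraph of H.induce C
            apply hCclass K ?_ hKne
            constructor
            · intro w hw
              have := hK.1 hw
              obtain ⟨hw1, hw2⟩ := Finset.mem_inter.mp this
              rcases Finset.mem_insert.mp hw2 with h | h
              · exact absurd (h ▸ hw) hvK
              · exact Finset.mem_inter.mpr ⟨hw1, h⟩
            · intro a ha
              have := hK.2 ha
              obtain ⟨ha1, hin1, hin2⟩ := Finset.mem_filter.mp this
              have hf : a.1 ∈ C := by
                rcases Finset.mem_insert.mp hin1 with h | h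
                · exact absurd (h ▸ K.mem_fst a ha) hvK
                · exact h
              have hsnd : a.2 ∈ C := by
                rcases Finset.mem_insert.mp hin2 with h | h
                · exact absurd (h ▸ K.mem_snd a ha) hvK
                · exact h
              exact Finset.mem_filter.mpr ⟨ha1, hf, hsnd⟩
        · -- colour j ≠ c : class unchanged
          have hceq : H.verts.filter (fun w => Function.update β' v c w = j)
              = (H.verts.erase v).filter (fun w => β' w = j) := by
            ext w
            constructor
            · intro hw
              obtain ⟨hw1, hw2⟩ := Finset.mem_filter.mp hw
              by_cases hwv : w = v
              · subst hwv
                rw [Function.update_self] at hw2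
                exact absurd hw2.symm hjc
              · rw [Function.update_of_ne hwv] at hw2
                exact Finset.mem_filter.mpr ⟨Finset.mem_erase.mpr ⟨hwv, hw1⟩, hw2⟩
            · intro hw
              obtain ⟨hw1, hw2⟩ := Finset.mem_filter.mp hw
              obtain ⟨hwv, hwm⟩ := Finset.mem_erase.mp hw1
              exact Finset.mem_filter.mpr
                ⟨hwm, by rw [Function.update_of_ne hwv]; exact hw2⟩
          rw [hceq]
          have := hβ'cl j hjT
          rw [hclass j] at this
          rwa [induce_induce H (Finset.filter_subset _ _)] at this

end Digraph'
lemma twoColours_zero {s : ℕ} (F : Fin s → ℕ → ℕ × ℕ) (i : Fin s) :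
    twoColours F i 0 = F i := rfl

lemma twoColours_one {s : ℕ} (F : Fin s → ℕ → ℕ × ℕ) (i : Fin s) :
    twoColours F i 1 = fun v => ∑ j ∈ Finset.univ.erase i, F j v := rfl

lemma fin2_cases (x : Fin 2) : x = 0 ∨ x = 1 := by
  revert x; decide

lemma twoColours_valid {D : Digraph'} {s : ℕ} {F : Fin s → ℕ → ℕ × ℕ}
    (hvalid : D.ValidPair s F) (i : Fin s) : D.ValidPair 2 (twoColours F i) := by
  refine ⟨hvalid.1, ?_⟩
  intro v hv
  obtain ⟨h1, h2⟩ := hvalid.2 v hv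
  constructor
  · rw [Fin.sum_univ_two, twoColours_zero, twoColours_one, Prod.fst_sum]
    rw [← Finset.add_sum_erase Finset.univ (fun c => (F c v).1) (Finset.mem_univ i)] at h1
    exact h1
  · rw [Fin.sum_univ_two, twoColours_zero, twoColours_one, Prod.snd_sum]
    rw [← Finset.add_sum_erase Finset.univ (fun c => (F c v).2) (Finset.mem_univ i)] at h2
    exact h2

lemma twoColours_implies {D : Digraph'} {s : ℕ} {F : Fin s → ℕ → ℕ × ℕ}
    (hs : 0 < s) (i : Fin s)
    (h : D.Dicolourable 2 (twoColours F i)) : D.Dicolourable s F := by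
  obtain ⟨α, hα⟩ := h
  have h0 := hα 0
  have h1 := hα 1
  rw [twoColours_zero] at h0
  rw [twoColours_one] at h1
  set X₁ : Finset ℕ := D.verts.filter (fun v => α v = 1) with hX₁
  set H₁ : Digraph' := D.induce X₁ with hH₁
  have hH₁verts : H₁.verts = X₁ := Digraph'.induce_verts_of_subset (Finset.filter_subset _ _)
  obtain ⟨γ, hγmem, hγcl⟩ := Digraph'.partition_lemma hs F (Finset.univ.erase i)
    H₁.verts.card H₁ le_rfl h1
  refine ⟨fun v => if α v = 0 then i else γ v, ?_⟩
  intro k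
  by_cases hki : k = i
  · subst hki
    have hset : (D.verts.filter fun v => (if α v = 0 then k else γ v) = k)
        = D.verts.filter (fun v => α v = 0) := by
      ext w
      constructor
      · intro hw
        obtain ⟨hw1, hw2⟩ := Finset.mem_filter.mp hw
        by_cases hαw : α w = 0
        · exact Finset.mem_filter.mpr ⟨hw1, hαw⟩
        · exfalso
          rw [if_neg hαw] at hw2
          have hα1 : α w = 1 := (fin2_cases (α w)).resolve_left hαw
          have hwX : w ∈ H₁.verts := by
            rw [hH₁verts]
            exact Finset.mem_filter.mpr ⟨hw1, hα1⟩
          have := hγmem w hwX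
          exact (Finset.mem_erase.mp this).1 hw2
      · intro hw
        obtain ⟨hw1, hw2⟩ := Finset.mem_filter.mp hw
        exact Finset.mem_filter.mpr ⟨hw1, by rw [if_pos hw2]⟩
    rw [hset]
    exact h0
  · have hkerase : k ∈ Finset.univ.erase i := Finset.mem_erase.mpr ⟨hki, Finset.mem_univ k⟩
    have hset : (D.verts.filter fun v => (if α v = 0 then i else γ v) = k)
        = X₁.filter (fun v => γ v = k) := by
      ext w
      constructor
      · intro hw
        obtain ⟨hw1, hw2⟩ := Finset.mem_filter.mp hw
        by_cases hαw : α w = 0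
        · rw [if_pos hαw] at hw2
          exact absurd hw2.symm hki
        · rw [if_neg hαw] at hw2
          have hα1 : α w = 1 := (fin2_cases (α w)).resolve_left hαw
          exact Finset.mem_filter.mpr ⟨Finset.mem_filter.mpr ⟨hw1, hα1⟩, hw2⟩
      · intro hw
        obtain ⟨hw1, hw2⟩ := Finset.mem_filter.mp hw
        obtain ⟨hwD, hα1⟩ := Finset.mem_filter.mp hw1
        have hαw : α w ≠ 0 := by rw [hα1]; decide
        exact Finset.mem_filter.mpr ⟨hwD, by rw [if_neg hαw]; exact hw2⟩
    rw [hset]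
    have := hγcl k hkerase
    rw [hH₁verts] at this
    rwa [Digraph'.induce_induce D (Finset.filter_subset _ _)] at this

/-- **Lemma (reduction to two colours).** Let `(D,F)` be a valid pair that is not hard with
`D` biconnected. Then either `D` is `F`-dicolourable, or there is a colour `i` such that,
setting `f̃₁ = fᵢ` and `f̃₂ = Σ_{j≠i} f_j`, the pair `(D,(f̃₁,f̃₂))` is valid and not hard, and
`F̃`-dicolourability of `D` implies its `F`-dicolourability. -/
theorem reduce_to_two_colours
    (D : Digraph') (s : ℕ) (F : Fin s → ℕ → ℕ × ℕ)
    (hvalid : D.ValidPair s F) (hnothard : ¬ IsHardPair s D F) (hbi : D.Biconnected) :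
    D.Dicolourable s F ∨
      ∃ i : Fin s,
        D.ValidPair 2 (twoColours F i) ∧
        ¬ IsHardPair 2 D (twoColours F i) ∧
        (D.Dicolourable 2 (twoColours F i) → D.Dicolourable s F) := by
  -- an arc exists, so some vertex has positive in-degree
  obtain ⟨a, ha⟩ := Digraph'.exists_arc hvalid.1 hbi.1
  have hamem : a.2 ∈ D.verts := D.mem_snd a ha
  have hapos : 0 < D.inDeg a.2 := Digraph'.inDeg_pos ha
  rcases Nat.eq_zero_or_pos s with hs0 | hs
  · exfalso
    subst hs0
    have h1 := (hvalid.2 a.2 hamem).1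
    simp at h1
    omega
  right
  by_contra hcon
  push_neg at hcon
  have hallhard : ∀ i : Fin s, IsHardPair 2 D (twoColours F i) := by
    intro i
    by_contra hnh
    obtain ⟨h2c, hnc⟩ := hcon i (twoColours_valid hvalid i) hnh
    exact hnc (twoColours_implies hs i h2c)
  have hbf : ∀ i : Fin s, Digraph'.BaseForm 2 D (twoColours F i) :=
    fun i => Digraph'.hard_biconnected_baseForm (hallhard i) hbi
  -- support
  set Supp : Fin s → Prop := fun i => ∃ w ∈ D.verts, F i w ≠ (0, 0) with hSupp
  have hnosupp : ∀ i : Fin s, ¬ Supp i → ∀ w ∈ D.verts, F i w = (0, 0) := by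
    intro i hi w hw
    by_contra hne
    exact hi ⟨w, hw, hne⟩
  -- decode basic form for a supported colour
  have hdecode : ∀ i : Fin s, Supp i →
      (D.BidirectedOddCycle ∧ (∀ v ∈ D.verts, F i v = (1, 1)) ∧
        (∀ v ∈ D.verts, ∑ j ∈ Finset.univ.erase i, F j v = (1, 1))) ∨
      (D.BidirectedComplete ∧ (∀ u ∈ D.verts, ∀ v ∈ D.verts, F i u = F i v) ∧
        (∀ v ∈ D.verts, (F i v).1 = (F i v).2) ∧
        (∀ v ∈ D.verts, ∑ k, (F k v).2 = D.verts.card - 1)) := by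
    intro i hsupp
    rcases hbf i with ⟨c, hc1, hc2⟩ | ⟨hOdd, i', j', hij', hi', hj', _⟩ |
        ⟨hComp, hconst, hsym, hsum⟩
    · -- mono: impossible
      exfalso
      rcases fin2_cases c with hc | hc
      · -- colour 0 = F i is everything: (D,F) is a mono hard pair
        subst hc
        apply hnothard
        apply Digraph'.IsHardPair.mono i hbi
        · intro v hv
          have := hc1 v hv
          rwa [twoColours_zero] at this
        · intro k hki v hv
          have h1 := hc2 1 (by decide) v hv
          rw [twoColours_one] at h1
          have h1' : ∑ j ∈ Finset.univ.erase i, F j v = (0, 0) := h1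
          have hfst : ∑ j ∈ Finset.univ.erase i, (F j v).1 = 0 := by
            rw [← Prod.fst_sum, h1']
          have hsnd : ∑ j ∈ Finset.univ.erase i, (F j v).2 = 0 := by
            rw [← Prod.snd_sum, h1']
          have hkmem : k ∈ Finset.univ.erase i := Finset.mem_erase.mpr ⟨hki, Finset.mem_univ k⟩
          exact Prod.ext (Finset.sum_eq_zero_iff.mp hfst k hkmem)
            (Finset.sum_eq_zero_iff.mp hsnd k hkmem)
      · -- colour 1 = F i is zero: contradicts support
        subst hc
        obtain ⟨w, hw, hne⟩ := hsupp
        have := hc2 0 (by decide) w hw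
        rw [twoColours_zero] at this
        exact hne this
    · -- bicycle
      left
      have hboth : (∀ v ∈ D.verts, twoColours F i 0 v = (1, 1)) ∧
          (∀ v ∈ D.verts, twoColours F i 1 v = (1, 1)) := by
        rcases fin2_cases i' with h0 | h0 <;> rcases fin2_cases j' with h1 | h1 <;>
          subst h0 <;> subst h1
        · exact absurd rfl hij'
        · exact ⟨hi', hj'⟩
        · exact ⟨hj', hi'⟩
        · exact absurd rfl hij'
      refine ⟨hOdd, ?_, ?_⟩
      · intro v hv
        have := hboth.1 v hv
        rwa [twoColours_zero] at this
      · intro v hv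
        have := hboth.2 v hv
        rwa [twoColours_one] at this
    · -- complete
      right
      refine ⟨hComp, ?_, ?_, ?_⟩
      · intro u hu v hv
        have := hconst 0 u hu v hv
        rwa [twoColours_zero] at this
      · intro v hv
        have := hsym 0 v hv
        rwa [twoColours_zero] at this
      · intro v hv
        have := hsum v hv
        rw [Fin.sum_univ_two, twoColours_zero, twoColours_one] at this
        rw [Prod.snd_sum] at this
        rw [← Finset.add_sum_erase Finset.univ (fun c => (F c v).2) (Finset.mem_univ i)]
        exact this
  -- there is a supported colour
  have hsupp0 : ∃ i : Fin s, Supp i := by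
    have h1 := (hvalid.2 a.2 hamem).1
    have : ∃ i : Fin s, (F i a.2).1 ≠ 0 := by
      by_contra hno
      push_neg at hno
      rw [Finset.sum_eq_zero (fun i _ => hno i)] at h1
      omega
    obtain ⟨i, hi⟩ := this
    exact ⟨i, a.2, hamem, fun heq => hi (by rw [heq])⟩
  -- no supported colour yields the bicycle case
  have hnoC : ∀ i : Fin s, Supp i →
      ¬ (D.BidirectedOddCycle ∧ (∀ v ∈ D.verts, F i v = (1, 1)) ∧
        (∀ v ∈ D.verts, ∑ j ∈ Finset.univ.erase i, F j v = (1, 1))) := by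
    intro i hsupp ⟨hOdd, hFi, hSum⟩
    by_cases hex : ∃ j : Fin s, j ≠ i ∧ ∀ v ∈ D.verts, F j v = (1, 1)
    · obtain ⟨j, hji, hFj⟩ := hex
      apply hnothard
      apply Digraph'.IsHardPair.bicycle i j (Ne.symm hji) hOdd hFi hFj
      intro k hki hkj v hv
      have h1 : ∑ t ∈ Finset.univ.erase i, (F t v).1 = 1 := by
        rw [← Prod.fst_sum, hSum v hv]
      have h2 : ∑ t ∈ Finset.univ.erase i, (F t v).2 = 1 := by
        rw [← Prod.snd_sum, hSum v hv]
      have hjmem : j ∈ Finset.univ.erase i := Finset.mem_erase.mpr ⟨hji, Finset.mem_univ j⟩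
      have hkmem : k ∈ (Finset.univ.erase i).erase j :=
        Finset.mem_erase.mpr ⟨hkj, Finset.mem_erase.mpr ⟨hki, Finset.mem_univ k⟩⟩
      have e1 : (F j v).1 + ∑ t ∈ (Finset.univ.erase i).erase j, (F t v).1 = 1 :=
        (Finset.add_sum_erase _ (fun t => (F t v).1) hjmem).trans h1
      have e2 : (F j v).2 + ∑ t ∈ (Finset.univ.erase i).erase j, (F t v).2 = 1 :=
        (Finset.add_sum_erase _ (fun t => (F t v).2) hjmem).trans h2
      rw [hFj v hv] at e1 e2
      simp only at e1 e2
      have z1 : ∑ t ∈ (Finset.univ.erase i).erase j, (F t v).1 = 0 := by omega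
      have z2 : ∑ t ∈ (Finset.univ.erase i).erase j, (F t v).2 = 0 := by omega
      exact Prod.ext (Finset.sum_eq_zero_iff.mp z1 k hkmem)
        (Finset.sum_eq_zero_iff.mp z2 k hkmem)
    · push_neg at hex
      -- pick v₀ and a supported colour j ≠ i
      obtain ⟨v₀, hv₀⟩ := Finset.card_pos.mp (lt_of_lt_of_le Nat.zero_lt_two hbi.1)
      have h1 : ∑ t ∈ Finset.univ.erase i, (F t v₀).1 = 1 := by
        rw [← Prod.fst_sum, hSum v₀ hv₀]
      have hexj : ∃ j ∈ Finset.univ.erase i, (F j v₀).1 ≠ 0 := by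
        by_contra hno
        push_neg at hno
        rw [Finset.sum_eq_zero hno] at h1
        omega
      obtain ⟨j, hjmem, hj1⟩ := hexj
      have hji : j ≠ i := (Finset.mem_erase.mp hjmem).1
      have hsuppj : Supp j := ⟨v₀, hv₀, fun heq => hj1 (by rw [heq])⟩
      rcases hdecode j hsuppj with ⟨_, hFj, _⟩ | ⟨_, hconstj, hsymj, _⟩
      · obtain ⟨w, hw, hne⟩ := hex j hji
        exact hne (hFj w hw)
      · -- F j is a symmetric constant ≤ (1,1), nonzero at v₀, hence ≡ (1,1): contradiction
        have hle : (F j v₀).1 ≤ 1 := by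
          rw [← h1]
          exact Finset.single_le_sum (f := fun t => (F t v₀).1) (fun t _ => Nat.zero_le _) hjmem
        have hv1 : (F j v₀).1 = 1 := by omega
        have hv2 : (F j v₀).2 = 1 := by rw [← hsymj v₀ hv₀]; exact hv1
        obtain ⟨w, hw, hne⟩ := hex j hji
        apply hne
        rw [hconstj w hw v₀ hv₀]
        exact Prod.ext hv1 hv2
  -- hence every supported colour is in the complete case; (D,F) is a complete hard pair
  obtain ⟨i₀, hsupp₀⟩ := hsupp0
  have hD₀ := (hdecode i₀ hsupp₀).resolve_left (hnoC i₀ hsupp₀)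
  apply hnothard
  apply Digraph'.IsHardPair.complete hD₀.1
  · intro k u hu v hv
    by_cases hk : Supp k
    · exact ((hdecode k hk).resolve_left (hnoC k hk)).2.1 u hu v hv
    · rw [hnosupp k hk u hu, hnosupp k hk v hv]
  · intro k v hv
    by_cases hk : Supp k
    · exact ((hdecode k hk).resolve_left (hnoC k hk)).2.2.1 v hv
    · rw [hnosupp k hk v hv]
  · exact hD₀.2.2.2
end

section
/- Let (D,F = (f₁,f₂)) be a valid tight pair that is not a hard pair and such that D is biconnected. If the pair does not satisfy property (E), then D is F-dicolourable. -/
open scoped Classical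

open Digraph'

section Helpers

namespace Digraph'

lemma mem_inNbrs {D : Digraph'} {w v : ℕ} : w ∈ D.inNbrs v ↔ (w, v) ∈ D.arcs := by
  simp only [inNbrs, Finset.mem_image, Finset.mem_filter]
  constructor
  · rintro ⟨⟨a, b⟩, ⟨ha, hb⟩, rfl⟩
    subst hb; exact ha
  · intro h; exact ⟨(w, v), ⟨h, rfl⟩, rfl⟩

lemma mem_outNbrs {D : Digraph'} {w v : ℕ} : w ∈ D.outNbrs v ↔ (v, w) ∈ D.arcs := by
  simp only [outNbrs, Finset.mem_image, Finset.mem_filter]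
  constructor
  · rintro ⟨⟨a, b⟩, ⟨ha, hb⟩, rfl⟩
    subst hb; exact ha
  · intro h; exact ⟨(v, w), ⟨h, rfl⟩, rfl⟩

lemma card_inNbrs (D : Digraph') (v : ℕ) : (D.inNbrs v).card = D.inDeg v := by
  apply Finset.card_image_of_injOn
  intro a ha b hb hab
  simp only [Finset.coe_filter, Set.mem_setOf_eq, Finset.mem_coe, Finset.mem_filter] at ha hb
  exact Prod.ext hab (ha.2.trans hb.2.symm)

lemma card_outNbrs (D : Digraph') (v : ℕ) : (D.outNbrs v).card = D.outDeg v := by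
  apply Finset.card_image_of_injOn
  intro a ha b hb hab
  simp only [Finset.coe_filter, Set.mem_setOf_eq, Finset.mem_coe, Finset.mem_filter] at ha hb
  exact Prod.ext (ha.2.trans hb.2.symm) hab

lemma ugAdj_symm {D : Digraph'} {u v : ℕ} (h : D.ugAdj u v) : D.ugAdj v u :=
  ⟨h.2.1, h.1, h.2.2.symm⟩

lemma ugAdj_mem_nbrs {D : Digraph'} {v u : ℕ} (h : D.ugAdj v u) :
    u ∈ D.inNbrs v ∨ u ∈ D.outNbrs v := by
  rcases h.2.2 with h' | h'
  · exact Or.inr (mem_outNbrs.mpr h')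
  · exact Or.inl (mem_inNbrs.mpr h')

lemma del_ugAdj {D : Digraph'} {X : Finset ℕ} {u v : ℕ} (h : (D.del X).ugAdj u v) :
    D.ugAdj u v := by
  obtain ⟨h1, h2, h3⟩ := h
  rw [del_verts] at h1 h2
  refine ⟨(Finset.mem_sdiff.mp h1).1, (Finset.mem_sdiff.mp h2).1, ?_⟩
  rcases h3 with h' | h'
  · exact Or.inl (Finset.mem_filter.mp h').1
  · exact Or.inr (Finset.mem_filter.mp h').1

end Digraph'

open Digraph'

/-- the other colour -/
def otherC (c : Fin 2) : Fin 2 := if c = 0 then 1 else 0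

lemma otherC_ne (c : Fin 2) : otherC c ≠ c := by revert c; decide

lemma eq_of_ne_otherC : ∀ c k : Fin 2, k ≠ otherC c → k = c := by decide

lemma eq_otherC_of_ne : ∀ c k : Fin 2, k ≠ c → k = otherC c := by decide

lemma sum_c (g : Fin 2 → ℕ) (c : Fin 2) : g c + g (otherC c) = g 0 + g 1 := by
  have h : c = 0 ∨ c = 1 := by
    rcases c with ⟨(_ | _ | n), hc⟩
    · exact Or.inl rfl
    · exact Or.inr rfl
    · omega
  rcases h with h | h <;> subst h <;> simp [otherC] <;> omega

lemma pos_of_ne_zero_pair {p : ℕ × ℕ} (h : p ≠ (0, 0)) : 0 < p.1 ∨ 0 < p.2 := by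
  rcases p with ⟨a, b⟩
  by_contra hc
  push_neg at hc
  have h1 : a = 0 := Nat.le_zero.mp hc.1
  have h2 : b = 0 := Nat.le_zero.mp hc.2
  exact h (by rw [h1, h2])

/-- every vertex except possibly the last has a neighbour later in the list -/
def HLN (D : Digraph') : List ℕ → Prop
  | [] => True
  | v :: t => (t = [] ∨ ∃ u ∈ t, D.ugAdj v u) ∧ HLN D t

lemma HLN_mono {D₁ D₂ : Digraph'} (h : ∀ u v, D₁.ugAdj u v → D₂.ugAdj u v) :
    ∀ L, HLN D₁ L → HLN D₂ L := by
  intro L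
  induction L with
  | nil => exact fun h' => trivial
  | cons v t ih =>
    rintro ⟨h1, h2⟩
    refine ⟨?_, ih h2⟩
    rcases h1 with h1 | ⟨u, hu, hadj⟩
    · exact Or.inl h1
    · exact Or.inr ⟨u, hu, h _ _ hadj⟩

lemma crossing {D : Digraph'} (S : Finset ℕ) {u v : ℕ}
    (h : Relation.ReflTransGen D.ugAdj u v) (hu : u ∈ S) (hv : v ∉ S) :
    ∃ a b, a ∈ S ∧ b ∉ S ∧ D.ugAdj a b := by
  revert hv
  induction h with
  | refl => intro hv; exact absurd hu hv
  | tail h₁ h₂ ih =>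
    intro hv
    rename_i b c
    by_cases hb : b ∈ S
    · exact ⟨b, c, hb, hv, h₂⟩
    · exact ih hb

lemma mem_of_getLast?' : ∀ {l : List ℕ} {a : ℕ}, l.getLast? = some a → a ∈ l := by
  intro l
  induction l with
  | nil => simp
  | cons b t ih =>
    intro a h
    rcases t with _ | ⟨c, t'⟩
    · simp only [List.getLast?_singleton, Option.some.injEq] at h
      subst h; exact List.mem_singleton_self _
    · rw [List.getLast?_cons_cons] at h
      exact List.mem_cons_of_mem _ (ih h)

lemma extend {D : Digraph'} (hconn : D.Connected) :
    ∀ (n : ℕ) (L : List ℕ), L ≠ [] → L.Nodup → HLN D L → (∀ v ∈ L, v ∈ D.verts) →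
    (D.verts \ L.toFinset).card ≤ n →
    ∃ L' : List ℕ, L'.Nodup ∧ HLN D L' ∧ L'.toFinset = D.verts ∧ L'.getLast? = L.getLast? := by
  intro n
  induction n with
  | zero =>
    intro L hne hnd hh hv hc
    have hsub : D.verts ⊆ L.toFinset := by
      rw [← Finset.sdiff_eq_empty_iff_subset]
      exact Finset.card_eq_zero.mp (Nat.le_zero.mp hc)
    have h1 : L.toFinset ⊆ D.verts := fun w hw => hv w (List.mem_toFinset.mp hw)
    exact ⟨L, hnd, hh, subset_antisymm h1 hsub, rfl⟩
  | succ n ih =>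
    intro L hne hnd hh hv hc
    by_cases hcov : D.verts ⊆ L.toFinset
    · have h1 : L.toFinset ⊆ D.verts := fun w hw => hv w (List.mem_toFinset.mp hw)
      exact ⟨L, hnd, hh, subset_antisymm h1 hcov, rfl⟩
    · obtain ⟨v, hvV, hvL⟩ := Finset.not_subset.mp hcov
      obtain ⟨u₀, hu₀⟩ := List.exists_mem_of_ne_nil L hne
      have hrtg := hconn.2 u₀ (hv u₀ hu₀) v hvV
      obtain ⟨a, b, haS, hbS, hab⟩ := crossing L.toFinset hrtg (List.mem_toFinset.mpr hu₀) hvL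
      have hbV : b ∈ D.verts := hab.2.1
      have hbL : b ∉ L := fun h => hbS (List.mem_toFinset.mpr h)
      have hnd' : (b :: L).Nodup := List.nodup_cons.mpr ⟨hbL, hnd⟩
      have hh' : HLN D (b :: L) :=
        ⟨Or.inr ⟨a, List.mem_toFinset.mp haS, ugAdj_symm hab⟩, hh⟩
      have hv' : ∀ w ∈ b :: L, w ∈ D.verts := by
        intro w hw
        rcases List.mem_cons.mp hw with rfl | hw'
        · exact hbV
        · exact hv w hw'
      have hc' : (D.verts \ (b :: L).toFinset).card ≤ n := by
        have heq : D.verts \ (b :: L).toFinset = (D.verts \ L.toFinset).erase b := by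
          rw [List.toFinset_cons]
          ext w
          simp only [Finset.mem_sdiff, Finset.mem_insert, Finset.mem_erase]
          tauto
        rw [heq, Finset.card_erase_of_mem (Finset.mem_sdiff.mpr ⟨hbV, hbS⟩)]
        omega
      obtain ⟨L', h1, h2, h3, h4⟩ := ih (b :: L) (List.cons_ne_nil _ _) hnd' hh' hv' hc'
      refine ⟨L', h1, h2, h3, ?_⟩
      rw [h4]
      rcases L with _ | ⟨a0, t0⟩
      · exact absurd rfl hne
      · exact List.getLast?_cons_cons ..

lemma exists_order {D : Digraph'} (hconn : D.Connected) {x : ℕ} (hx : x ∈ D.verts) :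
    ∃ L : List ℕ, L.Nodup ∧ HLN D L ∧ L.toFinset = D.verts ∧ L.getLast? = some x := by
  obtain ⟨L, h1, h2, h3, h4⟩ := extend hconn (D.verts \ [x].toFinset).card [x]
    (List.cons_ne_nil _ _) (List.nodup_singleton _) ⟨Or.inl rfl, trivial⟩
    (by intro v hv; rw [List.mem_singleton.mp hv]; exact hx) le_rfl
  exact ⟨L, h1, h2, h3, by simpa using h4⟩

/-- vertex `v` with already-coloured set `S` can take colour `k` -/
def GoodAt (D : Digraph') (F : Fin 2 → ℕ → ℕ × ℕ) (α : ℕ → Fin 2) (v : ℕ) (S : Finset ℕ)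
    (k : Fin 2) : Prop :=
  ((D.inNbrs v ∩ S).filter (fun w => α w = k)).card < (F k v).1 ∨
  ((D.outNbrs v ∩ S).filter (fun w => α w = k)).card < (F k v).2

def GoodList (D : Digraph') (F : Fin 2 → ℕ → ℕ × ℕ) (α : ℕ → Fin 2) :
    List ℕ → Finset ℕ → Prop
  | [], _ => True
  | v :: t, S => GoodAt D F α v S (α v) ∧ GoodList D F α t (insert v S)

lemma GoodAt_congr {D : Digraph'} {F : Fin 2 → ℕ → ℕ × ℕ} {α β : ℕ → Fin 2} {v : ℕ}
    {S : Finset ℕ} {k : Fin 2} (h : ∀ w ∈ S, α w = β w) :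
    GoodAt D F α v S k ↔ GoodAt D F β v S k := by
  unfold GoodAt
  rw [Finset.filter_congr (fun w hw => by
      rw [h w (Finset.mem_inter.mp hw).2] : ∀ w ∈ D.inNbrs v ∩ S, (α w = k) ↔ (β w = k)),
    Finset.filter_congr (fun w hw => by
      rw [h w (Finset.mem_inter.mp hw).2] : ∀ w ∈ D.outNbrs v ∩ S, (α w = k) ↔ (β w = k))]

lemma exists_colour {D : Digraph'} {F : Fin 2 → ℕ → ℕ × ℕ} (htight : D.Tight 2 F)
    {v : ℕ} (hv : v ∈ D.verts) (S : Finset ℕ) (α : ℕ → Fin 2) {u : ℕ}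
    (huS : u ∉ S) (hadj : D.ugAdj v u) :
    ∃ k, GoodAt D F α v S k := by
  by_contra hcon
  push_neg at hcon
  have hkey : ∀ (N : Finset ℕ) (g : Fin 2 → ℕ), (∀ k, (g k ≤ ((N ∩ S).filter (fun w => α w = k)).card)) →
      g 0 + g 1 = N.card → N ⊆ S := by
    intro N g hg hsum
    have hpart : ((N ∩ S).filter (fun w => α w = 0)).card
        + ((N ∩ S).filter (fun w => α w = 1)).card = (N ∩ S).card := by
      have := Finset.card_filter_add_card_filter_not (s := N ∩ S)
        (p := fun w => α w = 0)
      rw [Finset.filter_congr (fun w _ => by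
          constructor
          · intro h'; exact eq_otherC_of_ne 0 (α w) h'
          · intro h'; rw [h']; decide : ∀ w ∈ N ∩ S, (¬ α w = 0) ↔ (α w = 1))] at this
      exact this
    have hle : (N ∩ S).card ≤ N.card := Finset.card_le_card Finset.inter_subset_left
    have hge : N.card ≤ (N ∩ S).card := by
      rw [← hsum, ← hpart]
      exact Nat.add_le_add (hg 0) (hg 1)
    have heq : N ∩ S = N :=
      Finset.eq_of_subset_of_card_le Finset.inter_subset_left (by omega)
    intro w hw
    have : w ∈ N ∩ S := by rw [heq]; exact hw
    exact (Finset.mem_inter.mp this).2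
  have hin : D.inNbrs v ⊆ S := by
    refine hkey (D.inNbrs v) (fun k => (F k v).1) (fun k => ?_) ?_
    · exact le_of_not_gt (fun h => (hcon k) (Or.inl h))
    · have := (htight v hv).1
      rw [Fin.sum_univ_two] at this
      rw [this, card_inNbrs]
  have hout : D.outNbrs v ⊆ S := by
    refine hkey (D.outNbrs v) (fun k => (F k v).2) (fun k => ?_) ?_
    · exact le_of_not_gt (fun h => (hcon k) (Or.inr h))
    · have := (htight v hv).2
      rw [Fin.sum_univ_two] at this
      rw [this, card_outNbrs]
  rcases ugAdj_mem_nbrs hadj with h' | h'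
  · exact huS (hin h')
  · exact huS (hout h')

lemma greedy {D : Digraph'} {F : Fin 2 → ℕ → ℕ × ℕ} (htight : D.Tight 2 F)
    {x z : ℕ} {c : Fin 2} (hzx : z ≠ x) (hx : x ∈ D.verts)
    (hcase : ((z, x) ∈ D.arcs ∧ (F c x).1 = 0) ∨ ((x, z) ∈ D.arcs ∧ (F c x).2 = 0)) :
    ∀ (L : List ℕ) (S : Finset ℕ) (α₀ : ℕ → Fin 2),
    L.Nodup → HLN D L → (∀ v ∈ L, v ∈ D.verts) → (∀ v ∈ L, v ∉ S) →
    α₀ z = c → z ∈ S → (x ∈ L → L.getLast? = some x) → (L ≠ [] → x ∈ L) →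
    ∃ α : ℕ → Fin 2, (∀ w, w ∉ L → α w = α₀ w) ∧ GoodList D F α L S := by
  intro L
  induction L with
  | nil => exact fun S α₀ _ _ _ _ _ _ _ _ => ⟨α₀, fun _ _ => rfl, trivial⟩
  | cons v t ih =>
    intro S α₀ hnd hh hverts hdisj hαz hzS hxlast hxin
    have hxmem : x ∈ v :: t := hxin (List.cons_ne_nil _ _)
    have hvS : v ∉ S := hdisj v (List.mem_cons_self)
    have hvt : v ∉ t := (List.nodup_cons.mp hnd).1
    by_cases hvx : v = x
    · -- last vertex: t must be empty
      subst hvx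
      have ht : t = [] := by
        by_contra hne
        have h1 := hxlast (List.mem_cons_self)
        rcases t with _ | ⟨a, t'⟩
        · exact hne rfl
        · rw [List.getLast?_cons_cons] at h1
          exact hvt (mem_of_getLast?' h1)
      subst ht
      set c' := otherC c with hc'
      refine ⟨Function.update α₀ v c', ?_, ?_, trivial⟩
      · intro w hw
        exact Function.update_of_ne (by simpa using hw) _ _
      · have hαv : Function.update α₀ v c' v = c' := Function.update_self _ _ _
        rw [hαv]
        have hαzz : Function.update α₀ v c' z = c := by
          rw [Function.update_of_ne hzx, hαz]
        rcases hcase with ⟨harc, h0⟩ | ⟨harc, h0⟩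
        · left
          have hzmem : z ∈ D.inNbrs v := mem_inNbrs.mpr harc
          have hsub : ((D.inNbrs v ∩ S).filter (fun w => Function.update α₀ v c' w = c'))
              ⊆ (D.inNbrs v).erase z := by
            intro w hw
            simp only [Finset.mem_filter, Finset.mem_inter] at hw
            refine Finset.mem_erase.mpr ⟨?_, hw.1.1⟩
            rintro rfl
            rw [hαzz] at hw
            exact otherC_ne c hw.2.symm
          have hcard := Finset.card_le_card hsub
          rw [Finset.card_erase_of_mem hzmem, card_inNbrs] at hcard
          have hpos : 0 < D.inDeg v := by
            rw [← card_inNbrs]; exact Finset.card_pos.mpr ⟨z, hzmem⟩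
          have hF : (F c v).1 + (F c' v).1 = D.inDeg v := by
            have ht' := (htight v hx).1
            rw [Fin.sum_univ_two] at ht'
            rw [← ht']
            exact sum_c (fun i => (F i v).1) c
          omega
        · right
          have hzmem : z ∈ D.outNbrs v := mem_outNbrs.mpr harc
          have hsub : ((D.outNbrs v ∩ S).filter (fun w => Function.update α₀ v c' w = c'))
              ⊆ (D.outNbrs v).erase z := by
            intro w hw
            simp only [Finset.mem_filter, Finset.mem_inter] at hw
            refine Finset.mem_erase.mpr ⟨?_, hw.1.1⟩
            rintro rfl
            rw [hαzz] at hw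
            exact otherC_ne c hw.2.symm
          have hcard := Finset.card_le_card hsub
          rw [Finset.card_erase_of_mem hzmem, card_outNbrs] at hcard
          have hpos : 0 < D.outDeg v := by
            rw [← card_outNbrs]; exact Finset.card_pos.mpr ⟨z, hzmem⟩
          have hF : (F c v).2 + (F c' v).2 = D.outDeg v := by
            have ht' := (htight v hx).2
            rw [Fin.sum_univ_two] at ht'
            rw [← ht']
            exact sum_c (fun i => (F i v).2) c
          omega
    · -- middle vertex
      have hxt : x ∈ t := by
        rcases List.mem_cons.mp hxmem with h' | h'
        · exact absurd h'.symm hvx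
        · exact h'
      have htne : t ≠ [] := List.ne_nil_of_mem hxt
      have hex : ∃ u ∈ t, D.ugAdj v u := by
        rcases hh.1 with h' | h'
        · exact absurd h' htne
        · exact h'
      obtain ⟨u, hu, hadj⟩ := hex
      obtain ⟨k, hk⟩ := exists_colour htight (hverts v (List.mem_cons_self)) S α₀
        (hdisj u (List.mem_cons_of_mem _ hu)) hadj
      set α₁ := Function.update α₀ v k with hα₁
      have hzv : z ≠ v := fun h => hvS (h ▸ hzS)
      obtain ⟨α, hagree, hgood⟩ := ih (insert v S) α₁ (List.nodup_cons.mp hnd).2 hh.2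
        (fun w hw => hverts w (List.mem_cons_of_mem _ hw))
        (fun w hw => by
          intro hmem
          rcases Finset.mem_insert.mp hmem with rfl | h'
          · exact hvt hw
          · exact hdisj w (List.mem_cons_of_mem _ hw) h')
        (by rw [hα₁, Function.update_of_ne hzv, hαz])
        (Finset.mem_insert_of_mem hzS)
        (fun hxt' => by
          have h1 := hxlast hxmem
          rcases t with _ | ⟨a, t'⟩
          · exact absurd rfl htne
          · rw [List.getLast?_cons_cons] at h1
            exact h1)
        (fun _ => hxt)
      refine ⟨α, ?_, ?_, hgood⟩
      · intro w hw
        have hwt : w ∉ t := fun h => hw (List.mem_cons_of_mem _ h)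
        have hwv : w ≠ v := fun h => hw (h ▸ List.mem_cons_self)
        rw [hagree w hwt, hα₁, Function.update_of_ne hwv]
      · have hαv : α v = k := by
          rw [hagree v hvt, hα₁, Function.update_self]
        rw [hαv]
        refine (GoodAt_congr (fun w hw => ?_)).mp hk
        have hwL : w ∉ v :: t := fun h => hdisj w h hw
        have hwt : w ∉ t := fun h => hwL (List.mem_cons_of_mem _ h)
        have hwv : w ≠ v := fun h => hwL (h ▸ List.mem_cons_self)
        rw [hagree w hwt, hα₁, Function.update_of_ne hwv]

lemma max_split : ∀ (L : List ℕ) (T : Finset ℕ), T.Nonempty → (∀ w ∈ T, w ∈ L) →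
    ∃ v ∈ T, ∃ l₁ l₂ : List ℕ, L = l₁ ++ v :: l₂ ∧ ∀ w ∈ T, w ≠ v → w ∈ l₁ := by
  intro L
  induction L with
  | nil =>
    intro T ⟨w, hw⟩ hT
    exact absurd (hT w hw) List.not_mem_nil
  | cons a t ih =>
    intro T hne hT
    by_cases hth : ∃ w ∈ T, w ∈ t
    · obtain ⟨w₀, hw₀T, hw₀t⟩ := hth
      obtain ⟨v, hvT, l₁, l₂, heq, hcond⟩ := ih (T.filter (fun w => w ∈ t))
        ⟨w₀, Finset.mem_filter.mpr ⟨hw₀T, hw₀t⟩⟩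
        (fun w hw => (Finset.mem_filter.mp hw).2)
      refine ⟨v, (Finset.mem_filter.mp hvT).1, a :: l₁, l₂, by rw [heq]; rfl, ?_⟩
      intro w hw hwv
      by_cases hwt : w ∈ t
      · exact List.mem_cons_of_mem _ (hcond w (Finset.mem_filter.mpr ⟨hw, hwt⟩) hwv)
      · have : w ∈ a :: t := hT w hw
        rcases List.mem_cons.mp this with rfl | h'
        · exact List.mem_cons_self
        · exact absurd h' hwt
    · obtain ⟨w, hw⟩ := hne
      have hwa : w = a := by
        rcases List.mem_cons.mp (hT w hw) with h' | h'
        · exact h'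
        · exact absurd ⟨w, hw, h'⟩ hth
      subst hwa
      refine ⟨w, hw, [], t, rfl, ?_⟩
      intro w' hw' hwv
      rcases List.mem_cons.mp (hT w' hw') with h' | h'
      · exact absurd h' hwv
      · exact absurd ⟨w', hw', h'⟩ hth

lemma goodlist_split {D : Digraph'} {F : Fin 2 → ℕ → ℕ × ℕ} {α : ℕ → Fin 2} :
    ∀ (l₁ : List ℕ) (v : ℕ) (l₂ : List ℕ) (S : Finset ℕ),
    GoodList D F α (l₁ ++ v :: l₂) S → GoodAt D F α v (S ∪ l₁.toFinset) (α v) := by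
  intro l₁
  induction l₁ with
  | nil =>
    intro v l₂ S h
    simpa using h.1
  | cons a l₁ ih =>
    intro v l₂ S h
    have h2 : GoodList D F α (l₁ ++ v :: l₂) (insert a S) := h.2
    have := ih v l₂ (insert a S) h2
    have heq : insert a S ∪ l₁.toFinset = S ∪ (a :: l₁).toFinset := by
      rw [List.toFinset_cons, Finset.insert_union, Finset.union_insert]
    rwa [heq] at this

lemma good_dicolouring {D : Digraph'} {F : Fin 2 → ℕ → ℕ × ℕ} {α : ℕ → Fin 2} {L : List ℕ}
    (hcov : L.toFinset = D.verts) (hgood : GoodList D F α L ∅) :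
    D.IsDicolouring 2 F α := by
  intro i H hsub hne
  have hHverts : ∀ w ∈ H.verts, w ∈ D.verts ∧ α w = i := by
    intro w hw
    have := hsub.1 hw
    have h2 : w ∈ D.verts ∩ (D.verts.filter fun v => α v = i) := this
    have h3 := (Finset.mem_inter.mp h2).2
    exact ⟨(Finset.mem_inter.mp h2).1, (Finset.mem_filter.mp h3).2⟩
  obtain ⟨v, hvH, l₁, l₂, heq, hcond⟩ := max_split L H.verts hne
    (fun w hw => List.mem_toFinset.mp (hcov ▸ (hHverts w hw).1))
  rw [heq] at hgood
  have hga := goodlist_split l₁ v l₂ ∅ hgood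
  rw [Finset.empty_union, (hHverts v hvH).2] at hga
  have harcs : ∀ a ∈ H.arcs, a ∈ D.arcs := by
    intro a ha
    have := hsub.2 ha
    exact (Finset.mem_filter.mp this).1
  refine ⟨v, hvH, ?_⟩
  rcases hga with hga | hga
  · left
    refine lt_of_le_of_lt ?_ hga
    apply Finset.card_le_card_of_injOn Prod.fst
    · intro a ha
      simp only [Finset.coe_filter, Set.mem_setOf_eq, Finset.mem_coe, Finset.mem_filter] at ha
      obtain ⟨haH, hav⟩ := ha
      have haD : a ∈ D.arcs := harcs a haH
      have ha1H : a.1 ∈ H.verts := H.mem_fst a haH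
      have ha1v : a.1 ≠ v := hav ▸ H.no_loops a haH
      simp only [Finset.mem_coe, Finset.mem_filter, Finset.mem_inter]
      refine ⟨⟨mem_inNbrs.mpr ?_, List.mem_toFinset.mpr (hcond a.1 ha1H ha1v)⟩,
        (hHverts a.1 ha1H).2⟩
      rw [← hav]
      exact haD
    · intro a ha b hb hab
      simp only [Finset.coe_filter, Set.mem_setOf_eq] at ha hb
      exact Prod.ext hab (ha.2.trans hb.2.symm)
  · right
    refine lt_of_le_of_lt ?_ hga
    apply Finset.card_le_card_of_injOn Prod.snd
    · intro a ha
      simp only [Finset.coe_filter, Set.mem_setOf_eq, Finset.mem_coe, Finset.mem_filter] at ha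
      obtain ⟨haH, hav⟩ := ha
      have haD : a ∈ D.arcs := harcs a haH
      have ha2H : a.2 ∈ H.verts := H.mem_snd a haH
      have ha2v : a.2 ≠ v := fun h => (H.no_loops a haH) (hav.trans h.symm)
      simp only [Finset.mem_coe, Finset.mem_filter, Finset.mem_inter]
      refine ⟨⟨mem_outNbrs.mpr ?_, List.mem_toFinset.mpr (hcond a.2 ha2H ha2v)⟩,
        (hHverts a.2 ha2H).2⟩
      rw [← hav]
      exact haD
    · intro a ha b hb hab
      simp only [Finset.coe_filter, Set.mem_setOf_eq] at ha hb
      exact Prod.ext (ha.2.trans hb.2.symm) hab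

lemma core {D : Digraph'} {F : Fin 2 → ℕ → ℕ × ℕ} (htight : D.Tight 2 F)
    (hbi : D.Biconnected) {x z : ℕ} {c : Fin 2} (hz : z ∈ D.verts) (hx : x ∈ D.verts)
    (hzx : z ≠ x) (hFz : F c z ≠ (0, 0))
    (hcase : ((z, x) ∈ D.arcs ∧ (F c x).1 = 0) ∨ ((x, z) ∈ D.arcs ∧ (F c x).2 = 0)) :
    D.Dicolourable 2 F := by
  have hconn' : (D.del {z}).Connected := hbi.2.2 z hz
  have hx' : x ∈ (D.del {z}).verts := by
    rw [del_verts]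
    exact Finset.mem_sdiff.mpr ⟨hx, by simpa using fun h => hzx h.symm⟩
  obtain ⟨L, hnd, hhln, hcov, hlast⟩ := exists_order hconn' hx'
  have hhlnD : HLN D L := HLN_mono (fun u v h => del_ugAdj h) L hhln
  have hLnotz : ∀ v ∈ L, v ≠ z := by
    intro v hv h
    have := List.mem_toFinset.mpr hv
    rw [hcov, del_verts] at this
    have := (Finset.mem_sdiff.mp this).2
    subst h
    simp at this
  have hLverts : ∀ v ∈ L, v ∈ D.verts := by
    intro v hv
    have := List.mem_toFinset.mpr hv
    rw [hcov, del_verts] at this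
    exact (Finset.mem_sdiff.mp this).1
  obtain ⟨α, hagree, hgood⟩ := greedy htight hzx hx hcase L ({z} : Finset ℕ) (fun _ => c)
    hnd hhlnD hLverts
    (fun v hv => by simpa using hLnotz v hv)
    rfl (Finset.mem_singleton_self _)
    (fun _ => hlast) (fun _ => mem_of_getLast?' hlast)
  have hzL : z ∉ L := fun h => hLnotz z h rfl
  have hαz : α z = c := hagree z hzL
  -- full list
  have hgoodfull : GoodList D F α (z :: L) ∅ := by
    refine ⟨?_, ?_⟩
    · rw [hαz]
      unfold GoodAt
      rw [Finset.inter_empty, Finset.filter_empty, Finset.card_empty,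
        Finset.inter_empty, Finset.filter_empty, Finset.card_empty]
      exact pos_of_ne_zero_pair hFz
    · have : (insert z (∅ : Finset ℕ)) = {z} := rfl
      rw [this]
      exact hgood
  have hcovfull : (z :: L).toFinset = D.verts := by
    rw [List.toFinset_cons, hcov, del_verts, Finset.sdiff_singleton_eq_erase,
      Finset.insert_erase hz]
  exact ⟨α, good_dicolouring hcovfull hgoodfull⟩

lemma boundary {D : Digraph'} {F : Fin 2 → ℕ → ℕ × ℕ} (htight : D.Tight 2 F)
    (hbi : D.Biconnected) (hnothard : ¬ IsHardPair 2 D F) {z₀ : ℕ} {c : Fin 2}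
    (hz₀ : z₀ ∈ D.verts) (hT : F c z₀ = (0, 0)) :
    D.Dicolourable 2 F := by
  by_cases hall : ∀ v ∈ D.verts, F c v = (0, 0)
  · exfalso
    apply hnothard
    refine IsHardPair.mono (otherC c) hbi ?_ ?_
    · intro v hv
      have h1 := (htight v hv).1
      have h2 := (htight v hv).2
      rw [Fin.sum_univ_two] at h1 h2
      have hs1 := sum_c (fun i => (F i v).1) c
      have hs2 := sum_c (fun i => (F i v).2) c
      have hc0 : F c v = (0, 0) := hall v hv
      have hc1 : (F c v).1 = 0 := by rw [hc0]
      have hc2 : (F c v).2 = 0 := by rw [hc0]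
      refine Prod.ext ?_ ?_
      · simp only at hs1 ⊢; omega
      · simp only at hs2 ⊢; omega
    · intro k hk v hv
      rw [eq_of_ne_otherC c k hk]
      exact hall v hv
  · push_neg at hall
    obtain ⟨v, hv, hFv⟩ := hall
    set S := D.verts.filter (fun w => F c w = (0, 0)) with hS
    have hz₀S : z₀ ∈ S := Finset.mem_filter.mpr ⟨hz₀, hT⟩
    have hvS : v ∉ S := fun h => hFv (Finset.mem_filter.mp h).2
    have hrtg := hbi.2.1.2 z₀ hz₀ v hv
    obtain ⟨a, b, haS, hbS, hab⟩ := crossing S hrtg hz₀S hvS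
    have haV : a ∈ D.verts := hab.1
    have hbV : b ∈ D.verts := hab.2.1
    have hFa : F c a = (0, 0) := (Finset.mem_filter.mp haS).2
    have hFb : F c b ≠ (0, 0) := fun h => hbS (Finset.mem_filter.mpr ⟨hbV, h⟩)
    rcases hab.2.2 with harc | harc
    · -- (a, b) ∈ arcs : a has out-neighbour b
      have hba : b ≠ a := fun h => (D.no_loops (a, b) harc) (by rw [h])
      exact core htight hbi hbV haV hba hFb (Or.inr ⟨harc, by rw [hFa]⟩)
    · -- (b, a) ∈ arcs : a has in-neighbour b
      have hba : b ≠ a := D.no_loops (b, a) harc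
      exact core htight hbi hbV haV hba hFb (Or.inl ⟨harc, by rw [hFa]⟩)

end Helpers

/-- **Lemma.** Let `(D,F=(f₁,f₂))` be a valid tight non-hard pair with `D` biconnected.
If the pair does not satisfy property (E), then `D` is `F`-dicolourable. -/
theorem not_propE_dicolourable
    (D : Digraph') (F : Fin 2 → ℕ → ℕ × ℕ)
    (hvalid : D.ValidPair 2 F) (htight : D.Tight 2 F)
    (hnothard : ¬ IsHardPair 2 D F) (hbi : D.Biconnected)
    (hE : ¬ D.PropE F) :
    D.Dicolourable 2 F := by

  simp only [PropE, not_forall] at hE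
  obtain ⟨x, hx, c, hnc⟩ := hE
  rcases not_and_or.mp hnc with h | h
  · -- in-degree case
    rw [_root_.not_imp] at h
    obtain ⟨hpos, hle⟩ := h
    have h0 : (F c x).1 = 0 := by omega
    have hne : (D.arcs.filter fun a => a.2 = x).Nonempty := Finset.card_pos.mp hpos
    obtain ⟨a, ha⟩ := hne
    obtain ⟨haA, hax⟩ := Finset.mem_filter.mp ha
    have harc : (a.1, x) ∈ D.arcs := by rw [← hax]; exact haA
    have hzV : a.1 ∈ D.verts := D.mem_fst a haA
    have hzx : a.1 ≠ x := hax ▸ D.no_loops a haA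
    by_cases hFz : F c a.1 = (0, 0)
    · exact boundary htight hbi hnothard hzV hFz
    · exact core htight hbi hzV hx hzx hFz (Or.inl ⟨harc, h0⟩)
  · -- out-degree case
    rw [_root_.not_imp] at h
    obtain ⟨hpos, hle⟩ := h
    have h0 : (F c x).2 = 0 := by omega
    have hne : (D.arcs.filter fun a => a.1 = x).Nonempty := Finset.card_pos.mp hpos
    obtain ⟨a, ha⟩ := hne
    obtain ⟨haA, hax⟩ := Finset.mem_filter.mp ha
    have harc : (x, a.2) ∈ D.arcs := by rw [← hax]; exact haA
    have hzV : a.2 ∈ D.verts := D.mem_snd a haA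
    have hzx : a.2 ≠ x := fun hh => (D.no_loops a haA) (hax.trans hh.symm)
    by_cases hFz : F c a.2 = (0, 0)
    · exact boundary htight hbi hnothard hzV hFz
    · exact core htight hbi hzV hx hzx hFz (Or.inr ⟨harc, h0⟩)
end

section
/- Let (D,F = (f₁,f₂)) be a valid tight pair that is not a hard pair and such that D is biconnected. If the pair does not satisfy property (DS), i.e. there exist a vertex x with N⁻(x) = N⁺(x) and a colour c ∈ {1,2} with f_c⁻(x) ≠ f_c⁺(x), then D is F-dicolourable. -/
open scoped Classical

open Digraph'

namespace NotDS

/-- Colour `c` is still available at `v` given the set `P` of already-coloured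
vertices and partial colouring `α`. -/
def avail (D : Digraph') (F : Fin 2 → ℕ → ℕ × ℕ) (v : ℕ) (P : Finset ℕ)
    (α : ℕ → Fin 2) (c : Fin 2) : Prop :=
  ((D.inNbrs v ∩ P).filter (fun w => α w = c)).card < (F c v).1 ∨
  ((D.outNbrs v ∩ P).filter (fun w => α w = c)).card < (F c v).2

noncomputable def pick (D : Digraph') (F : Fin 2 → ℕ → ℕ × ℕ) (v : ℕ) (P : Finset ℕ)
    (α : ℕ → Fin 2) : Fin 2 :=
  if avail D F v P α 0 then 0 else 1

noncomputable def run (D : Digraph') (F : Fin 2 → ℕ → ℕ × ℕ) :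
    List ℕ → Finset ℕ → (ℕ → Fin 2) → (ℕ → Fin 2)
  | [], _, α => α
  | v :: l, P, α => run D F l (insert v P) (Function.update α v (pick D F v P α))

lemma avail_congr {D F v P} {α β : ℕ → Fin 2} (h : ∀ w ∈ P, α w = β w) (c : Fin 2) :
    avail D F v P α c ↔ avail D F v P β c := by
  unfold avail
  have h1 : (D.inNbrs v ∩ P).filter (fun w => α w = c)
      = (D.inNbrs v ∩ P).filter (fun w => β w = c) := by
    apply Finset.filter_congr
    intro w hw
    rw [h w (Finset.mem_inter.mp hw).2]
  have h2 : (D.outNbrs v ∩ P).filter (fun w => α w = c)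
      = (D.outNbrs v ∩ P).filter (fun w => β w = c) := by
    apply Finset.filter_congr
    intro w hw
    rw [h w (Finset.mem_inter.mp hw).2]
  rw [h1, h2]

lemma pick_congr {D F v P} {α β : ℕ → Fin 2} (h : ∀ w ∈ P, α w = β w) :
    pick D F v P α = pick D F v P β := by
  unfold pick
  by_cases h0 : avail D F v P α 0
  · rw [if_pos h0, if_pos ((avail_congr h 0).mp h0)]
  · rw [if_neg h0, if_neg (fun hb => h0 ((avail_congr h 0).mpr hb))]

lemma run_not_mem (D : Digraph') (F : Fin 2 → ℕ → ℕ × ℕ) :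
    ∀ (l : List ℕ) (P : Finset ℕ) (α : ℕ → Fin 2) (v : ℕ), v ∉ l →
      run D F l P α v = α v := by
  intro l
  induction l with
  | nil => intro P α v _; rfl
  | cons a l ih =>
      intro P α v hv
      have hva : v ≠ a := fun h => hv (h ▸ (List.mem_cons_self : a ∈ a :: l))
      have hvl : v ∉ l := fun h => hv (List.mem_cons_of_mem a h)
      show run D F l _ _ v = α v
      rw [ih _ _ v hvl, Function.update_of_ne hva]

lemma run_spec (D : Digraph') (F : Fin 2 → ℕ → ℕ × ℕ) :
    ∀ (L₁ : List ℕ) (v : ℕ) (L₂ : List ℕ) (P : Finset ℕ) (α : ℕ → Fin 2),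
      (L₁ ++ v :: L₂).Nodup → (∀ w ∈ L₁ ++ v :: L₂, w ∉ P) →
      run D F (L₁ ++ v :: L₂) P α v
        = pick D F v (P ∪ L₁.toFinset) (run D F (L₁ ++ v :: L₂) P α) := by
  intro L₁
  induction L₁ with
  | nil =>
      intro v L₂ P α hnd hdisj
      have hvL₂ : v ∉ L₂ := by
        simp only [List.nil_append, List.nodup_cons] at hnd
        exact hnd.1
      have hrun : run D F ([] ++ v :: L₂) P α v = pick D F v P α := by
        show run D F L₂ (insert v P) (Function.update α v (pick D F v P α)) v
            = pick D F v P α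
        rw [run_not_mem D F L₂ _ _ v hvL₂, Function.update_self]
      rw [hrun]
      have hagree : ∀ w ∈ P, α w = run D F ([] ++ v :: L₂) P α w := by
        intro w hw
        have hwl : w ∉ [] ++ v :: L₂ := fun hmem => hdisj w hmem hw
        rw [run_not_mem D F _ _ _ w hwl]
      have : P ∪ ([] : List ℕ).toFinset = P := by simp
      rw [this]
      exact pick_congr hagree
  | cons a L₁ ih =>
      intro v L₂ P α hnd hdisj
      have hnd' : (L₁ ++ v :: L₂).Nodup := (List.nodup_cons.mp hnd).2
      have hna : a ∉ L₁ ++ v :: L₂ := (List.nodup_cons.mp hnd).1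
      have hdisj' : ∀ w ∈ L₁ ++ v :: L₂, w ∉ insert a P := by
        intro w hw
        simp only [Finset.mem_insert]
        push_neg
        constructor
        · rintro rfl; exact hna hw
        · exact hdisj w (List.mem_cons_of_mem a hw)
      have hstep : run D F ((a :: L₁) ++ v :: L₂) P α
          = run D F (L₁ ++ v :: L₂) (insert a P)
              (Function.update α a (pick D F a P α)) := rfl
      rw [hstep, ih v L₂ (insert a P) _ hnd' hdisj']
      congr 1
      ext w
      simp only [Finset.mem_union, Finset.mem_insert, List.toFinset_cons]
      tauto

lemma card_inNbrs (D : Digraph') (v : ℕ) : (D.inNbrs v).card = D.inDeg v := by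
  unfold Digraph'.inNbrs Digraph'.inDeg
  apply Finset.card_image_of_injOn
  intro a ha b hb h
  simp only [Finset.mem_coe, Finset.mem_filter] at ha hb
  exact Prod.ext h (ha.2.trans hb.2.symm)

lemma card_outNbrs (D : Digraph') (v : ℕ) : (D.outNbrs v).card = D.outDeg v := by
  unfold Digraph'.outNbrs Digraph'.outDeg
  apply Finset.card_image_of_injOn
  intro a ha b hb h
  simp only [Finset.mem_coe, Finset.mem_filter] at ha hb
  exact Prod.ext (ha.2.trans hb.2.symm) h

lemma filter_partition (S : Finset ℕ) (α : ℕ → Fin 2) :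
    (S.filter (fun w => α w = 0)).card + (S.filter (fun w => α w = 1)).card = S.card := by
  have h2 : ∀ a : Fin 2, ¬ a = 0 ↔ a = 1 := by decide
  have : S.filter (fun w => α w = 1) = S.filter (fun w => ¬ α w = 0) := by
    apply Finset.filter_congr
    intro w _
    exact (h2 (α w)).symm
  rw [this]
  exact Finset.card_filter_add_card_filter_not (fun w => α w = 0)

/-- If both colours fail at `v`, then all neighbours of `v` lie in `P` and the counts
are exactly the budgets. -/
lemma both_fail {D : Digraph'} {F : Fin 2 → ℕ → ℕ × ℕ} {v : ℕ} {P : Finset ℕ}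
    {α : ℕ → Fin 2}
    (hin : D.inDeg v ≤ (F 0 v).1 + (F 1 v).1)
    (hout : D.outDeg v ≤ (F 0 v).2 + (F 1 v).2)
    (h0 : ¬ avail D F v P α 0) (h1 : ¬ avail D F v P α 1) :
    (∀ c : Fin 2, ((D.inNbrs v ∩ P).filter (fun w => α w = c)).card = (F c v).1
      ∧ ((D.outNbrs v ∩ P).filter (fun w => α w = c)).card = (F c v).2)
    ∧ D.inNbrs v ⊆ P ∧ D.outNbrs v ⊆ P := by
  unfold avail at h0 h1
  push_neg at h0 h1
  obtain ⟨h0in, h0out⟩ := h0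
  obtain ⟨h1in, h1out⟩ := h1
  have hinpart := filter_partition (D.inNbrs v ∩ P) α
  have houtpart := filter_partition (D.outNbrs v ∩ P) α
  have hincard : (D.inNbrs v ∩ P).card ≤ D.inDeg v := by
    rw [← card_inNbrs]
    exact Finset.card_le_card Finset.inter_subset_left
  have houtcard : (D.outNbrs v ∩ P).card ≤ D.outDeg v := by
    rw [← card_outNbrs]
    exact Finset.card_le_card Finset.inter_subset_left
  have hineq : (D.inNbrs v ∩ P).card = (D.inNbrs v).card := by
    rw [card_inNbrs]; omega
  have houteq : (D.outNbrs v ∩ P).card = (D.outNbrs v).card := by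
    rw [card_outNbrs]; omega
  have hinsub : D.inNbrs v ⊆ P := by
    rw [← Finset.inter_eq_left]
    exact (Finset.eq_of_subset_of_card_le Finset.inter_subset_left (le_of_eq hineq.symm))
  have houtsub : D.outNbrs v ⊆ P := by
    rw [← Finset.inter_eq_left]
    exact (Finset.eq_of_subset_of_card_le Finset.inter_subset_left (le_of_eq houteq.symm))
  refine ⟨?_, hinsub, houtsub⟩
  intro c
  have hc : c = 0 ∨ c = 1 := by omega
  rcases hc with rfl | rfl
  · constructor <;> omega
  · constructor <;> omega

/-- Each non-first element of the list has a neighbour later in the list. -/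
def chain (D : Digraph') : List ℕ → Prop
  | [] => True
  | v :: l => (l = [] ∨ ∃ w ∈ l, D.ugAdj v w) ∧ chain D l

lemma chain_append_right (D : Digraph') :
    ∀ (A B : List ℕ), chain D (A ++ B) → chain D B := by
  intro A
  induction A with
  | nil => intro B h; exact h
  | cons a A ih => intro B h; exact ih B h.2

lemma cross (D : Digraph') (hc : D.Connected) {S : Finset ℕ} (hS : S ⊆ D.verts)
    {u₀ : ℕ} (hu₀ : u₀ ∈ S) {w₀ : ℕ} (hw₀v : w₀ ∈ D.verts) (hw₀ : w₀ ∉ S) :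
    ∃ w u, w ∈ D.verts ∧ w ∉ S ∧ u ∈ S ∧ D.ugAdj w u := by
  have h := hc.2 w₀ hw₀v u₀ (hS hu₀)
  have key : ∀ a, Relation.ReflTransGen D.ugAdj a u₀ → a ∉ S →
      ∃ w u, w ∈ D.verts ∧ w ∉ S ∧ u ∈ S ∧ D.ugAdj w u := by
    intro a h
    induction h using Relation.ReflTransGen.head_induction_on with
    | refl => intro ha; exact absurd hu₀ ha
    | head h' _ ih =>
        rename_i b c _
        intro hb
        by_cases hcS : c ∈ S
        · exact ⟨b, c, h'.1, hb, hcS, h'⟩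
        · exact ih hcS
  exact key w₀ h hw₀

lemma build (D : Digraph') (hc : D.Connected) :
    ∀ (n : ℕ) (L : List ℕ), L ≠ [] → L.Nodup → L.toFinset ⊆ D.verts → chain D L →
      (D.verts \ L.toFinset).card ≤ n →
      ∃ M' : List ℕ, (M' ++ L).Nodup ∧ (M' ++ L).toFinset = D.verts ∧ chain D (M' ++ L) := by
  intro n
  induction n with
  | zero =>
      intro L hne hnd hsub hch hcard
      have hempty : D.verts \ L.toFinset = ∅ := Finset.card_eq_zero.mp (Nat.le_zero.mp hcard)
      have : L.toFinset = D.verts :=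
        Finset.Subset.antisymm hsub (Finset.sdiff_eq_empty_iff_subset.mp hempty)
      exact ⟨[], hnd, this, hch⟩
  | succ n ih =>
      intro L hne hnd hsub hch hcard
      by_cases hempty : D.verts \ L.toFinset = ∅
      · have : L.toFinset = D.verts :=
          Finset.Subset.antisymm hsub (Finset.sdiff_eq_empty_iff_subset.mp hempty)
        exact ⟨[], hnd, this, hch⟩
      · obtain ⟨w₀, hw₀⟩ := Finset.nonempty_of_ne_empty hempty
        have hw₀v : w₀ ∈ D.verts := (Finset.mem_sdiff.mp hw₀).1
        have hw₀S : w₀ ∉ L.toFinset := (Finset.mem_sdiff.mp hw₀).2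
        have hhead : L.head hne ∈ L.toFinset := List.mem_toFinset.mpr (List.head_mem hne)
        obtain ⟨w, u, hwv, hwS, huS, hadj⟩ := cross D hc hsub hhead hw₀v hw₀S
        have hwl : w ∉ L := fun h => hwS (List.mem_toFinset.mpr h)
        have hnd' : (w :: L).Nodup := List.nodup_cons.mpr ⟨hwl, hnd⟩
        have hsub' : (w :: L).toFinset ⊆ D.verts := by
          rw [List.toFinset_cons]
          intro y hy
          rcases Finset.mem_insert.mp hy with rfl | hy
          · exact hwv
          · exact hsub hy
        have hch' : chain D (w :: L) := ⟨Or.inr ⟨u, List.mem_toFinset.mp huS, hadj⟩, hch⟩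
        have hcard' : (D.verts \ (w :: L).toFinset).card ≤ n := by
          rw [List.toFinset_cons, Finset.sdiff_insert]
          have hmem : w ∈ D.verts \ L.toFinset := Finset.mem_sdiff.mpr ⟨hwv, hwS⟩
          have := Finset.card_erase_of_mem hmem
          omega
        obtain ⟨M'', hA, hB, hC⟩ := ih (w :: L) (by simp) hnd' hsub' hch' hcard'
        refine ⟨M'' ++ [w], ?_, ?_, ?_⟩
        · rw [List.append_assoc]; exact hA
        · rw [List.append_assoc]; exact hB
        · rw [List.append_assoc]; exact hC

lemma exists_last_decomp (S : Finset ℕ) :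
    ∀ (L : List ℕ), S.Nonempty → (∀ w ∈ S, w ∈ L.toFinset) →
      ∃ L₁ v L₂, L = L₁ ++ v :: L₂ ∧ v ∈ S ∧ ∀ w ∈ S, w ∈ insert v L₁.toFinset := by
  intro L
  induction L using List.reverseRecOn with
  | nil =>
      intro hne hsub
      obtain ⟨w, hw⟩ := hne
      simpa using hsub w hw
  | append_singleton M a ih =>
      intro hne hsub
      by_cases ha : a ∈ S
      · refine ⟨M, a, [], rfl, ha, ?_⟩
        intro w hw
        have := hsub w hw
        simp only [List.toFinset_append, List.toFinset_cons, List.toFinset_nil,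
          Finset.mem_union, Finset.mem_insert, Finset.notMem_empty, or_false] at this
        simp only [Finset.mem_insert]
        tauto
      · have hsub' : ∀ w ∈ S, w ∈ M.toFinset := by
          intro w hw
          have := hsub w hw
          simp only [List.toFinset_append, List.toFinset_cons, List.toFinset_nil,
            Finset.mem_union, Finset.mem_insert, Finset.notMem_empty, or_false] at this
          rcases this with h | h
          · exact h
          · exact absurd (h ▸ hw) ha
        obtain ⟨L₁, v, L₂, hL, hv, hcov⟩ := ih hne hsub'
        exact ⟨L₁, v, L₂ ++ [a], by rw [hL]; simp, hv, hcov⟩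

lemma good (D : Digraph') (F : Fin 2 → ℕ → ℕ × ℕ)
    (hvalid : D.ValidPair 2 F) (x : ℕ)
    (hNS : D.inNbrs x = D.outNbrs x) (hFx : ∃ c : Fin 2, (F c x).1 ≠ (F c x).2)
    (L : List ℕ) (hnd : L.Nodup) (hLV : L.toFinset = D.verts) (hch : chain D L)
    (hlast : ∃ L', L = L' ++ [x])
    (L₁ : List ℕ) (v : ℕ) (L₂ : List ℕ) (hL : L = L₁ ++ v :: L₂) :
    avail D F v L₁.toFinset (run D F L ∅ (fun _ => 0))
      ((run D F L ∅ (fun _ => 0)) v) := by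
  set α := run D F L ∅ (fun _ => 0) with hα
  have hndL : (L₁ ++ v :: L₂).Nodup := hL ▸ hnd
  have hspec : α v = pick D F v L₁.toFinset α := by
    have h := run_spec D F L₁ v L₂ ∅ (fun _ => 0) hndL
      (fun w _ hw => absurd hw (Finset.notMem_empty w))
    rw [hα, hL]
    rw [h, Finset.empty_union]
  have hv : v ∈ D.verts := by
    rw [← hLV, hL]
    exact List.mem_toFinset.mpr (List.mem_append_right L₁ (List.mem_cons_self : v ∈ v :: L₂))
  have hval := hvalid.2 v hv
  have hin : D.inDeg v ≤ (F 0 v).1 + (F 1 v).1 := by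
    have := hval.1; rwa [Fin.sum_univ_two] at this
  have hout : D.outDeg v ≤ (F 0 v).2 + (F 1 v).2 := by
    have := hval.2; rwa [Fin.sum_univ_two] at this
  have H : avail D F v L₁.toFinset α 0 ∨ avail D F v L₁.toFinset α 1 := by
    by_contra hno
    push_neg at hno
    obtain ⟨counts, hinsub, houtsub⟩ := both_fail hin hout hno.1 hno.2
    cases L₂ with
    | nil =>
        have hvx : v = x := by
          obtain ⟨L', hL'⟩ := hlast
          have heq : L₁ ++ [v] = L' ++ [x] := by rw [← hL, hL']
          have := (List.append_inj' heq rfl).2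
          simpa using this
        subst hvx
        obtain ⟨c, hc⟩ := hFx
        have h1 := (counts c).1
        have h2 := (counts c).2
        rw [hNS] at h1
        exact hc (h1.symm.trans h2)
    | cons w' L₂' =>
        have hchv : chain D (v :: w' :: L₂') :=
          chain_append_right D L₁ (v :: w' :: L₂') (hL ▸ hch)
        rcases hchv.1 with habs | ⟨w, hwL₂, hadj⟩
        · exact absurd habs (List.cons_ne_nil w' L₂')
        · have hwN : w ∈ D.inNbrs v ∨ w ∈ D.outNbrs v := by
            rcases hadj.2.2 with harc | harc
            · right
              exact Finset.mem_image.mpr ⟨(v, w), Finset.mem_filter.mpr ⟨harc, rfl⟩, rfl⟩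
            · left
              exact Finset.mem_image.mpr ⟨(w, v), Finset.mem_filter.mpr ⟨harc, rfl⟩, rfl⟩
          have hwP : w ∈ L₁.toFinset := by
            rcases hwN with h | h
            · exact hinsub h
            · exact houtsub h
          have hdisj := List.disjoint_of_nodup_append hndL
          exact hdisj (List.mem_toFinset.mp hwP) (List.mem_cons_of_mem v hwL₂)
  by_cases h0 : avail D F v L₁.toFinset α 0
  · have hc0 : α v = 0 := by rw [hspec]; unfold pick; rw [if_pos h0]
    rw [hc0]
    exact h0
  · have hc1 : α v = 1 := by rw [hspec]; unfold pick; rw [if_neg h0]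
    rw [hc1]
    rcases H with h | h
    · exact absurd h h0
    · exact h


end NotDS


/-- **Lemma.** Let `(D,F=(f₁,f₂))` be a valid tight non-hard pair with `D` biconnected.
If the pair does not satisfy property (DS), i.e. there exist a vertex `x` with
`N⁻(x) = N⁺(x)` and a colour `c` with `f_c⁻(x) ≠ f_c⁺(x)`, then `D` is `F`-dicolourable. -/
theorem not_propDS_dicolourable
    (D : Digraph') (F : Fin 2 → ℕ → ℕ × ℕ)
    (hvalid : D.ValidPair 2 F) (htight : D.Tight 2 F)
    (hnothard : ¬ IsHardPair 2 D F) (hbi : D.Biconnected)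
    (hDS : ∃ x ∈ D.verts, D.inNbrs x = D.outNbrs x ∧
      ∃ c : Fin 2, (F c x).1 ≠ (F c x).2) :
    D.Dicolourable 2 F := by
  classical
  obtain ⟨x, hxv, hNS, hFx⟩ := hDS
  have hc : D.Connected := hvalid.1
  have hchx : NotDS.chain D [x] := ⟨Or.inl rfl, trivial⟩
  have hsubx : ([x] : List ℕ).toFinset ⊆ D.verts := by
    intro w hw
    simp only [List.toFinset_cons, List.toFinset_nil, Finset.mem_insert,
      Finset.notMem_empty, or_false, insert_empty_eq, Finset.mem_singleton] at hw
    exact hw ▸ hxv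
  obtain ⟨M', hnd, hLV, hch⟩ := NotDS.build D hc (D.verts \ ([x] : List ℕ).toFinset).card
    [x] (by simp) (by simp) hsubx hchx (le_refl _)
  set L := M' ++ [x] with hLdef
  set α := NotDS.run D F L ∅ (fun _ => 0) with hα
  refine ⟨α, ?_⟩
  intro i Hd hsubH hneH
  have hverts : ∀ w ∈ Hd.verts, w ∈ D.verts ∧ α w = i := by
    intro w hw
    have h' : w ∈ D.verts ∩ (D.verts.filter fun u => α u = i) := hsubH.1 hw
    have h2 := (Finset.mem_inter.mp h').2
    exact ⟨(Finset.mem_inter.mp h').1, (Finset.mem_filter.mp h2).2⟩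
  have hcov : ∀ w ∈ Hd.verts, w ∈ L.toFinset := by
    intro w hw
    rw [hLV]
    exact (hverts w hw).1
  obtain ⟨L₁, v, L₂, hL, hvH, hcovv⟩ := NotDS.exists_last_decomp Hd.verts L hneH hcov
  have hgood := NotDS.good D F hvalid x hNS hFx L hnd hLV hch ⟨M', rfl⟩ L₁ v L₂ hL
  have hαv : α v = i := (hverts v hvH).2
  rw [← hα] at hgood
  rw [hαv] at hgood
  have harcsub : ∀ a ∈ Hd.arcs, a ∈ D.arcs := by
    intro a ha
    have h' : a ∈ D.arcs.filter
        (fun a => a.1 ∈ (D.verts.filter fun u => α u = i)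
          ∧ a.2 ∈ (D.verts.filter fun u => α u = i)) := hsubH.2 ha
    exact (Finset.mem_filter.mp h').1
  have hmemP : ∀ w ∈ Hd.verts, w ≠ v → w ∈ L₁.toFinset := by
    intro w hw hne
    have := hcovv w hw
    rcases Finset.mem_insert.mp this with h | h
    · exact absurd h hne
    · exact h
  have hinb : Hd.inDeg v
      ≤ ((D.inNbrs v ∩ L₁.toFinset).filter (fun w => α w = i)).card := by
    apply Finset.card_le_card_of_injOn Prod.fst
    · intro a ha
      obtain ⟨haH, ha2⟩ := Finset.mem_filter.mp ha
      have haD : a ∈ D.arcs := harcsub a haH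
      have h1v : a.1 ∈ Hd.verts := Hd.mem_fst a haH
      have h1ne : a.1 ≠ v := ha2 ▸ Hd.no_loops a haH
      refine Finset.mem_filter.mpr ⟨Finset.mem_inter.mpr ⟨?_, hmemP a.1 h1v h1ne⟩, ?_⟩
      · exact Finset.mem_image.mpr ⟨a, Finset.mem_filter.mpr ⟨haD, ha2⟩, rfl⟩
      · exact (hverts a.1 h1v).2
    · intro a ha b hb h
      simp only [Finset.mem_coe, Finset.mem_filter] at ha hb
      exact Prod.ext h (ha.2.trans hb.2.symm)
  have houtb : Hd.outDeg v
      ≤ ((D.outNbrs v ∩ L₁.toFinset).filter (fun w => α w = i)).card := by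
    apply Finset.card_le_card_of_injOn Prod.snd
    · intro a ha
      obtain ⟨haH, ha1⟩ := Finset.mem_filter.mp ha
      have haD : a ∈ D.arcs := harcsub a haH
      have h2v : a.2 ∈ Hd.verts := Hd.mem_snd a haH
      have h2ne : a.2 ≠ v := fun h => (Hd.no_loops a haH) (ha1.trans h.symm)
      refine Finset.mem_filter.mpr ⟨Finset.mem_inter.mpr ⟨?_, hmemP a.2 h2v h2ne⟩, ?_⟩
      · exact Finset.mem_image.mpr ⟨a, Finset.mem_filter.mpr ⟨haD, ha1⟩, rfl⟩
      · exact (hverts a.2 h2v).2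
    · intro a ha b hb h
      simp only [Finset.mem_coe, Finset.mem_filter] at ha hb
      exact Prod.ext (ha.2.trans hb.2.symm) h
  refine ⟨v, hvH, ?_⟩
  rcases hgood with h | h
  · exact Or.inl (lt_of_le_of_lt hinb h)
  · exact Or.inr (lt_of_le_of_lt houtb h)
end

section
/- Let (D,F = (f₁,f₂)) be a valid tight pair that is not a hard pair and such that D is a bidirected complete graph. Then D is F-dicolourable. -/
open scoped Classical

open Digraph'


/-- Counting form of strict degeneracy of a vertex set w.r.t. weight `g`. -/
def OKset (g : ℕ → ℕ) (X : Finset ℕ) : Prop :=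
  ∀ t, (X.filter fun v => g v ≤ t).card ≤ t

lemma OKset_subset {g : ℕ → ℕ} {X Y : Finset ℕ} (h : OKset g X) (hYX : Y ⊆ X) :
    OKset g Y := fun t =>
  le_trans (Finset.card_le_card (Finset.filter_subset_filter _ hYX)) (h t)

lemma OKset_empty (g : ℕ → ℕ) : OKset g ∅ := by
  intro t; simp

lemma OKset_insert {g : ℕ → ℕ} {X : Finset ℕ} (h : OKset g X) {v : ℕ}
    (hv : X.card < g v) : OKset g (insert v X) := by
  intro t
  rw [Finset.filter_insert]
  by_cases hgv : g v ≤ t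
  · rw [if_pos hgv]
    calc (insert v (X.filter fun u => g u ≤ t)).card
        ≤ (X.filter fun u => g u ≤ t).card + 1 := Finset.card_insert_le _ _
      _ ≤ X.card + 1 :=
          Nat.add_le_add_right (Finset.card_le_card (Finset.filter_subset _ _)) 1
      _ ≤ g v := hv
      _ ≤ t := hgv
  · rw [if_neg hgv]; exact h t

lemma OKset_strong {g : ℕ → ℕ} {X : Finset ℕ} (h : OKset g X) :
    ∀ S ⊆ X, S.Nonempty → ∃ v ∈ S, S.card ≤ g v := by
  intro S hSX hSne
  by_contra hcon
  push_neg at hcon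
  have hsub : S ⊆ X.filter fun v => g v ≤ S.card - 1 := by
    intro v hv
    refine Finset.mem_filter.mpr ⟨hSX hv, ?_⟩
    have := hcon v hv
    omega
  have h1 := Finset.card_le_card hsub
  have h2 := h (S.card - 1)
  have h3 := Finset.card_pos.mpr hSne
  omega

/-- Key extremal lemma: if `Y` is OK for `g₁`, cannot be extended by any outside
vertex, and the complement fails for `g₂`, then all weights outside `Y` are forced. -/
lemma OKset_facts {V Y : Finset ℕ} {g₁ g₂ : ℕ → ℕ}
    (hsum : ∀ v ∈ V, V.card ≤ g₁ v + g₂ v + 1)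
    (hY : Y ⊆ V) (hOK : OKset g₁ Y)
    (hmax : ∀ v ∈ V \ Y, ¬ OKset g₁ (insert v Y))
    (hfail : ¬ OKset g₂ (V \ Y)) :
    (V \ Y).Nonempty ∧ ∀ v ∈ V \ Y, g₁ v = Y.card ∧ g₂ v + Y.card + 1 = V.card := by
  unfold OKset at hfail
  push_neg at hfail
  obtain ⟨t₀, ht₀⟩ := hfail
  set W := (V \ Y).filter (fun v => g₂ v ≤ t₀) with hWdef
  have hWsub : W ⊆ V \ Y := Finset.filter_subset _ _
  -- every vertex of W has g₁ ≤ Y.card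
  have key : ∀ v ∈ W, g₁ v ≤ Y.card := by
    intro v hv
    have hne := hmax v (hWsub hv)
    unfold OKset at hne
    push_neg at hne
    obtain ⟨t₁, ht₁⟩ := hne
    rw [Finset.filter_insert] at ht₁
    by_cases hgv : g₁ v ≤ t₁
    · rw [if_pos hgv] at ht₁
      have h1 : (insert v (Y.filter fun u => g₁ u ≤ t₁)).card
          ≤ (Y.filter fun u => g₁ u ≤ t₁).card + 1 := Finset.card_insert_le _ _
      have h2 : (Y.filter fun u => g₁ u ≤ t₁).card ≤ t₁ := hOK t₁
      have h3 : (Y.filter fun u => g₁ u ≤ t₁).card ≤ Y.card :=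
        Finset.card_le_card (Finset.filter_subset _ _)
      omega
    · rw [if_neg hgv] at ht₁
      have := hOK t₁
      omega
  have hWne : W.Nonempty := Finset.card_pos.mp (by omega)
  obtain ⟨v₀, hv₀⟩ := hWne
  have hv₀V : v₀ ∈ V := (Finset.mem_sdiff.mp (hWsub hv₀)).1
  have hg₂v₀ : g₂ v₀ ≤ t₀ := (Finset.mem_filter.mp hv₀).2
  have hYcard : Y.card ≤ V.card := Finset.card_le_card hY
  have hVY : (V \ Y).card = V.card - Y.card := Finset.card_sdiff_of_subset hY
  have hWcard : W.card ≤ (V \ Y).card := Finset.card_le_card hWsub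
  have hchain : V.card ≤ g₁ v₀ + g₂ v₀ + 1 := hsum v₀ hv₀V
  have hkv₀ := key v₀ hv₀
  -- V.card ≤ Y.card + t₀ + 1 ; t₀ + 1 ≤ W.card ≤ V.card - Y.card
  have hWeq : W = V \ Y := by
    apply Finset.eq_of_subset_of_card_le hWsub
    omega
  refine ⟨⟨v₀, hWeq ▸ hv₀⟩, ?_⟩
  intro v hv
  have hvW : v ∈ W := hWeq ▸ hv
  have h1 : g₁ v ≤ Y.card := key v hvW
  have h2 : g₂ v ≤ t₀ := (Finset.mem_filter.mp hvW).2
  have h3 : V.card ≤ g₁ v + g₂ v + 1 := hsum v (Finset.mem_sdiff.mp hv).1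
  -- also t₀ + 1 = V.card - Y.card from the chain
  omega

/-- Core partition lemma. -/
lemma OKset_partition (V : Finset ℕ) (g₁ g₂ : ℕ → ℕ)
    (hsum : ∀ v ∈ V, V.card ≤ g₁ v + g₂ v + 1)
    (hexc : ¬ ∃ c, ∀ v ∈ V, g₁ v = c ∧ g₂ v + c + 1 = V.card) :
    ∃ X ⊆ V, OKset g₁ X ∧ OKset g₂ (V \ X) := by
  -- choose X ⊆ V of maximum cardinality with OKset g₁ X
  have hne : (V.powerset.filter fun X => OKset g₁ X).Nonempty :=
    ⟨∅, Finset.mem_filter.mpr ⟨Finset.empty_mem_powerset V, OKset_empty g₁⟩⟩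
  obtain ⟨X, hXmem, hXmax⟩ :=
    Finset.exists_max_image (V.powerset.filter fun X => OKset g₁ X) Finset.card hne
  rw [Finset.mem_filter, Finset.mem_powerset] at hXmem
  obtain ⟨hXV, hXOK⟩ := hXmem
  by_cases hd : OKset g₂ (V \ X)
  · exact ⟨X, hXV, hXOK, hd⟩
  have hmaxX : ∀ v ∈ V \ X, ¬ OKset g₁ (insert v X) := by
    intro v hv hok
    have hvV := Finset.mem_sdiff.mp hv
    have : (insert v X).card ≤ X.card := by
      apply hXmax
      rw [Finset.mem_filter, Finset.mem_powerset]
      exact ⟨Finset.insert_subset hvV.1 hXV, hok⟩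
    rw [Finset.card_insert_of_notMem hvV.2] at this
    omega
  obtain ⟨hVXne, hfacts⟩ := OKset_facts hsum hXV hXOK hmaxX hd
  obtain ⟨v₀, hv₀⟩ := hVXne
  have hv₀V := Finset.mem_sdiff.mp hv₀
  have hg₁v₀ : g₁ v₀ = X.card := (hfacts v₀ hv₀).1
  -- for u ∈ X, the exchanged set X' = insert v₀ (X.erase u)
  by_cases hgood : ∃ u ∈ X, OKset g₂ (V \ insert v₀ (X.erase u))
  · obtain ⟨u, huX, hok2⟩ := hgood
    refine ⟨insert v₀ (X.erase u), ?_, ?_, hok2⟩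
    · exact Finset.insert_subset hv₀V.1 ((Finset.erase_subset u X).trans hXV)
    · apply OKset_insert (OKset_subset hXOK (Finset.erase_subset u X))
      rw [Finset.card_erase_of_mem huX, hg₁v₀]
      have : 1 ≤ X.card := Finset.card_pos.mpr ⟨u, huX⟩
      omega
  · exfalso
    push_neg at hgood
    apply hexc
    refine ⟨X.card, ?_⟩
    intro v hvV
    by_cases hvX : v ∈ X
    · -- exchange v out
      set X' := insert v₀ (X.erase v) with hX'def
      have hv₀notin : v₀ ∉ X.erase v := fun h => hv₀V.2 (Finset.erase_subset _ _ h)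
      have hX'V : X' ⊆ V :=
        Finset.insert_subset hv₀V.1 ((Finset.erase_subset v X).trans hXV)
      have hX'OK : OKset g₁ X' := by
        apply OKset_insert (OKset_subset hXOK (Finset.erase_subset v X))
        rw [Finset.card_erase_of_mem hvX, hg₁v₀]
        have : 1 ≤ X.card := Finset.card_pos.mpr ⟨v, hvX⟩
        omega
      have hX'card : X'.card = X.card := by
        rw [hX'def, Finset.card_insert_of_notMem hv₀notin,
          Finset.card_erase_of_mem hvX]
        have : 1 ≤ X.card := Finset.card_pos.mpr ⟨v, hvX⟩
        omega
      have hmaxX' : ∀ w ∈ V \ X', ¬ OKset g₁ (insert w X') := by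
        intro w hw hok
        have hwV := Finset.mem_sdiff.mp hw
        have : (insert w X').card ≤ X.card := by
          apply hXmax
          rw [Finset.mem_filter, Finset.mem_powerset]
          exact ⟨Finset.insert_subset hwV.1 hX'V, hok⟩
        rw [Finset.card_insert_of_notMem hwV.2, hX'card] at this
        omega
      have hfail' : ¬ OKset g₂ (V \ X') := hgood v hvX
      obtain ⟨_, hfacts'⟩ := OKset_facts hsum hX'V hX'OK hmaxX' hfail'
      have hvnotX' : v ∉ X' := by
        rw [hX'def, Finset.mem_insert]
        push_neg
        refine ⟨fun h => hv₀V.2 (h ▸ hvX), Finset.notMem_erase v X⟩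
      have := hfacts' v (Finset.mem_sdiff.mpr ⟨hvV, hvnotX'⟩)
      rw [hX'card] at this
      exact this
    · exact hfacts v (Finset.mem_sdiff.mpr ⟨hvV, hvX⟩)

namespace Digraph'

lemma inDeg_lt_card (H : Digraph') {v : ℕ} (hv : v ∈ H.verts) :
    H.inDeg v < H.verts.card := by
  have h1 : (H.arcs.filter fun a => a.2 = v).card ≤ (H.verts.erase v).card := by
    apply Finset.card_le_card_of_injOn Prod.fst
    · intro a ha
      rw [Finset.mem_coe, Finset.mem_filter] at ha
      exact Finset.mem_erase.mpr
        ⟨fun h => H.no_loops a ha.1 (h.trans ha.2.symm), H.mem_fst a ha.1⟩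
    · intro a ha b hb hab
      rw [Finset.mem_coe, Finset.mem_filter] at ha hb
      exact Prod.ext hab (ha.2.trans hb.2.symm)
  rw [Finset.card_erase_of_mem hv] at h1
  have h2 := Finset.card_pos.mpr ⟨v, hv⟩
  unfold inDeg
  omega

lemma outDeg_lt_card (H : Digraph') {v : ℕ} (hv : v ∈ H.verts) :
    H.outDeg v < H.verts.card := by
  have h1 : (H.arcs.filter fun a => a.1 = v).card ≤ (H.verts.erase v).card := by
    apply Finset.card_le_card_of_injOn Prod.snd
    · intro a ha
      rw [Finset.mem_coe, Finset.mem_filter] at ha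
      exact Finset.mem_erase.mpr
        ⟨fun h => H.no_loops a ha.1 (ha.2.trans h.symm), H.mem_snd a ha.1⟩
    · intro a ha b hb hab
      rw [Finset.mem_coe, Finset.mem_filter] at ha hb
      exact Prod.ext (ha.2.trans hb.2.symm) hab
  rw [Finset.card_erase_of_mem hv] at h1
  have h2 := Finset.card_pos.mpr ⟨v, hv⟩
  unfold outDeg
  omega

lemma inDeg_of_complete (D : Digraph') (h : D.BidirectedComplete) {v : ℕ}
    (hv : v ∈ D.verts) : D.inDeg v = D.verts.card - 1 := by
  have key : D.arcs.filter (fun a => a.2 = v)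
      = (D.verts.erase v).image (fun u => (u, v)) := by
    ext a
    simp only [Finset.mem_filter, Finset.mem_image, Finset.mem_erase]
    constructor
    · rintro ⟨ha, h2⟩
      exact ⟨a.1, ⟨fun he => D.no_loops a ha (he.trans h2.symm), D.mem_fst a ha⟩,
        by rw [← h2]⟩
    · rintro ⟨u, ⟨hne, huV⟩, rfl⟩
      exact ⟨h u huV v hv hne, rfl⟩
  unfold inDeg
  rw [key, Finset.card_image_of_injective _ (fun a b hab => congrArg Prod.fst hab),
    Finset.card_erase_of_mem hv]

lemma outDeg_of_complete (D : Digraph') (h : D.BidirectedComplete) {v : ℕ}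
    (hv : v ∈ D.verts) : D.outDeg v = D.verts.card - 1 := by
  have key : D.arcs.filter (fun a => a.1 = v)
      = (D.verts.erase v).image (fun u => (v, u)) := by
    ext a
    simp only [Finset.mem_filter, Finset.mem_image, Finset.mem_erase]
    constructor
    · rintro ⟨ha, h2⟩
      exact ⟨a.2, ⟨fun he => D.no_loops a ha (h2.trans he.symm), D.mem_snd a ha⟩,
        by rw [← h2]⟩
    · rintro ⟨u, ⟨hne, huV⟩, rfl⟩
      exact ⟨h v hv u huV (fun he => hne he.symm), rfl⟩
  unfold outDeg
  rw [key, Finset.card_image_of_injective _ (fun a b hab => congrArg Prod.snd hab),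
    Finset.card_erase_of_mem hv]

lemma strictlyBidegenerate_of_OK (D : Digraph') (C : Finset ℕ) (f : ℕ → ℕ × ℕ)
    (h : ∀ S ⊆ C, S.Nonempty → ∃ v ∈ S, S.card ≤ max (f v).1 (f v).2) :
    (D.induce C).StrictlyBidegenerate f := by
  intro H hsub hne
  have hS : H.verts ⊆ C := by
    intro v hv
    have hmem := hsub.1 hv
    simp only [Digraph'.induce] at hmem
    exact (Finset.mem_inter.mp hmem).2
  obtain ⟨v, hvS, hcard⟩ := h H.verts hS hne
  refine ⟨v, hvS, ?_⟩
  rcases le_max_iff.mp hcard with h1 | h2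
  · exact Or.inl (lt_of_lt_of_le (H.inDeg_lt_card hvS) h1)
  · exact Or.inr (lt_of_lt_of_le (H.outDeg_lt_card hvS) h2)

end Digraph'

/-- **Lemma (bidirected complete graphs).** Let `(D,F=(f₁,f₂))` be a valid tight non-hard pair
with `D` a bidirected complete graph. Then `D` is `F`-dicolourable. -/
theorem bidirectedComplete_dicolourable
    (D : Digraph') (F : Fin 2 → ℕ → ℕ × ℕ)
    (hvalid : D.ValidPair 2 F) (htight : D.Tight 2 F)
    (hnothard : ¬ IsHardPair 2 D F)
    (hcomp : D.BidirectedComplete) :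
    D.Dicolourable 2 F := by
  obtain ⟨hconn, _⟩ := hvalid
  have hVne : D.verts.Nonempty := hconn.1
  have hn1 : 1 ≤ D.verts.card := Finset.card_pos.mpr hVne
  set n := D.verts.card with hn
  set g₁ : ℕ → ℕ := fun v => max (F 0 v).1 (F 0 v).2 with hg₁
  set g₂ : ℕ → ℕ := fun v => max (F 1 v).1 (F 1 v).2 with hg₂
  have htF : ∀ v ∈ D.verts, (F 0 v).1 + (F 1 v).1 = n - 1 ∧
      (F 0 v).2 + (F 1 v).2 = n - 1 := by
    intro v hv
    have h1 := (htight v hv).1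
    have h2 := (htight v hv).2
    rw [Fin.sum_univ_two, D.inDeg_of_complete hcomp hv] at h1
    rw [Fin.sum_univ_two, D.outDeg_of_complete hcomp hv] at h2
    exact ⟨h1, h2⟩
  have hsum : ∀ v ∈ D.verts, n ≤ g₁ v + g₂ v + 1 := by
    intro v hv
    have h1 := (htF v hv).1
    have h2 : (F 0 v).1 ≤ g₁ v := le_max_left _ _
    have h3 : (F 1 v).1 ≤ g₂ v := le_max_left _ _
    omega
  have hexc : ¬ ∃ c, ∀ v ∈ D.verts, g₁ v = c ∧ g₂ v + c + 1 = n := by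
    rintro ⟨c, hc⟩
    apply hnothard
    have hcn : c + 1 ≤ n := by
      obtain ⟨v, hv⟩ := hVne
      have := (hc v hv).2
      omega
    have hF0 : ∀ v ∈ D.verts, F 0 v = (c, c) := by
      intro v hv
      have h1 := (htF v hv).1
      have h2 := (htF v hv).2
      have hgc := (hc v hv).1
      have hg2 := (hc v hv).2
      have e1 : (F 0 v).1 ≤ g₁ v := le_max_left _ _
      have e2 : (F 0 v).2 ≤ g₁ v := le_max_right _ _
      have e3 : (F 1 v).1 ≤ g₂ v := le_max_left _ _
      have e4 : (F 1 v).2 ≤ g₂ v := le_max_right _ _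
      exact Prod.ext_iff.mpr ⟨by omega, by omega⟩
    have hF1 : ∀ v ∈ D.verts, F 1 v = (n - 1 - c, n - 1 - c) := by
      intro v hv
      have h1 := (htF v hv).1
      have h2 := (htF v hv).2
      have hgc := (hc v hv).1
      have hg2 := (hc v hv).2
      have e1 : (F 0 v).1 ≤ g₁ v := le_max_left _ _
      have e2 : (F 0 v).2 ≤ g₁ v := le_max_right _ _
      have e3 : (F 1 v).1 ≤ g₂ v := le_max_left _ _
      have e4 : (F 1 v).2 ≤ g₂ v := le_max_right _ _
      exact Prod.ext_iff.mpr ⟨by omega, by omega⟩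
    refine IsHardPair.complete hcomp ?_ ?_ ?_
    · intro k u hu v hv
      fin_cases k
      · show F 0 u = F 0 v
        rw [hF0 u hu, hF0 v hv]
      · show F 1 u = F 1 v
        rw [hF1 u hu, hF1 v hv]
    · intro k v hv
      fin_cases k
      · show (F 0 v).1 = (F 0 v).2
        rw [hF0 v hv]
      · show (F 1 v).1 = (F 1 v).2
        rw [hF1 v hv]
    · intro v hv
      rw [Fin.sum_univ_two, hF0 v hv, hF1 v hv]
      show c + (n - 1 - c) = n - 1
      omega
  obtain ⟨X, hXV, hOK1, hOK2⟩ := OKset_partition D.verts g₁ g₂ hsum hexc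
  classical
  refine ⟨fun v => if v ∈ X then (0 : Fin 2) else 1, ?_⟩
  intro i
  fin_cases i
  · apply D.strictlyBidegenerate_of_OK
    intro S hSC hSne
    have hSX : S ⊆ X := by
      intro v hv
      have hmem := Finset.mem_filter.mp (hSC hv)
      by_contra hvX
      have h2 : (if v ∈ X then (0 : Fin 2) else 1) = 0 := hmem.2
      rw [if_neg hvX] at h2
      exact absurd h2 (by decide)
    exact OKset_strong hOK1 S hSX hSne
  · apply D.strictlyBidegenerate_of_OK
    intro S hSC hSne
    have hSX : S ⊆ D.verts \ X := by
      intro v hv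
      have hmem := Finset.mem_filter.mp (hSC hv)
      refine Finset.mem_sdiff.mpr ⟨hmem.1, fun hvX => ?_⟩
      have h2 : (if v ∈ X then (0 : Fin 2) else 1) = 1 := hmem.2
      rw [if_pos hvX] at h2
      exact absurd h2 (by decide)
    exact OKset_strong hOK2 S hSX hSne
end
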